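/- arXiv:1509.06308 — 4 statements merged into one kernel-verified Lean document; each statement's English description precedes it below -/
import Mathlib

section
/- For every real z > 0 and all real numbers a and b, one has 2·∫_0^∞ K_{a+b}(2z·cosh t)·cosh((a−b)t) dt = K_a(z)·K_b(z). -/
open Real MeasureTheory

/-- The modified Bessel function of the second kind, for `z > 0` and real order `ν`,
given by `K_ν(z) = ∫_0^∞ exp(−z cosh t) cosh(ν t) dt`. -/
noncomputable def besselK (ν z : ℝ) : ℝ :=
  ∫ t in Set.Ioi (0 : ℝ), Real.exp (-z * Real.cosh t) * Real.cosh (ν * t)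

private lemma besselK_bound_aux {z : ℝ} (hz : 0 < z) (ν : ℝ) :
    ∃ C : ℝ, ∀ t : ℝ, ν * t - z * Real.cosh t ≤ C - |t| := by
  set x : ℝ := 2 * (|ν| + 1) / z with hxdef
  have hx0 : 0 < x := by positivity
  refine ⟨(|ν| + 1) * (Real.log x - 1), fun t => ?_⟩
  have h1 : x * (|t| - Real.log x + 1) ≤ Real.exp |t| := by
    have h := Real.add_one_le_exp (|t| - Real.log x)
    rw [Real.exp_sub, Real.exp_log hx0] at h
    have h2 : x * (|t| - Real.log x + 1) ≤ x * (Real.exp |t| / x) := by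
      apply mul_le_mul_of_nonneg_left _ hx0.le
      linarith
    rwa [mul_div_cancel₀ _ hx0.ne'] at h2
  have hcosh : Real.exp |t| / 2 ≤ Real.cosh t := by
    rw [← Real.cosh_abs t, Real.cosh_eq]
    have := (Real.exp_pos (-|t|)).le
    linarith
  have hzx : z * x = 2 * (|ν| + 1) := by
    rw [hxdef]; field_simp
  have hz2 : (|ν| + 1) * (|t| - Real.log x + 1) ≤ z * Real.cosh t := by
    have h2 : z * (x * (|t| - Real.log x + 1)) ≤ z * Real.exp |t| :=
      mul_le_mul_of_nonneg_left h1 hz.le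
    have h3 : z * Real.exp |t| ≤ z * (2 * Real.cosh t) := by
      apply mul_le_mul_of_nonneg_left _ hz.le
      linarith
    have h4 : z * (x * (|t| - Real.log x + 1)) = 2 * ((|ν| + 1) * (|t| - Real.log x + 1)) := by
      rw [← mul_assoc, hzx]; ring
    linarith [h2, h3]
  have hνt : ν * t ≤ |ν| * |t| := by
    calc ν * t ≤ |ν * t| := le_abs_self _
    _ = |ν| * |t| := abs_mul _ _
  nlinarith [hz2, hνt]

private lemma integrable_exp_neg_abs' : Integrable (fun t : ℝ => Real.exp (-|t|)) := by
  have hIoi : IntegrableOn (fun t : ℝ => Real.exp (-|t|)) (Set.Ioi 0) := by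
    refine ((exp_neg_integrableOn_Ioi 0 one_pos).congr_fun (fun t ht => ?_) measurableSet_Ioi)
    simp [abs_of_pos (Set.mem_Ioi.mp ht)]
  have hIic : IntegrableOn (fun t : ℝ => Real.exp (-|t|)) (Set.Iic 0) := by
    rw [← Measure.map_neg_eq_self (volume : Measure ℝ)]
    have m : MeasurableEmbedding fun x : ℝ => -x := (Homeomorph.neg ℝ).measurableEmbedding
    rw [m.integrableOn_map_iff]
    simp_rw [Function.comp_def, abs_neg, Set.neg_preimage, Set.neg_Iic, neg_zero]
    exact (integrableOn_Ici_iff_integrableOn_Ioi (f := fun t : ℝ => Real.exp (-|t|)) (b := 0)).mpr hIoi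
  rw [← integrableOn_univ, ← Set.Iic_union_Ioi (a := (0:ℝ))]
  exact hIic.union hIoi

private lemma integrable_exp_aux {z : ℝ} (hz : 0 < z) (ν : ℝ) :
    Integrable (fun t : ℝ => Real.exp (ν * t - z * Real.cosh t)) := by
  obtain ⟨C, hC⟩ := besselK_bound_aux hz ν
  refine Integrable.mono' (integrable_exp_neg_abs'.const_mul (Real.exp C)) ?_ ?_
  · exact (by fun_prop :
      Continuous fun t : ℝ => Real.exp (ν * t - z * Real.cosh t)).aestronglyMeasurable
  · filter_upwards with t
    rw [Real.norm_eq_abs, abs_of_pos (Real.exp_pos _), ← Real.exp_add]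
    exact Real.exp_le_exp.2 (by linarith [hC t])

private lemma integrable_cosh_aux {z : ℝ} (hz : 0 < z) (ν : ℝ) :
    Integrable (fun t : ℝ => Real.exp (-z * Real.cosh t) * Real.cosh (ν * t)) := by
  have h : (fun t : ℝ => Real.exp (-z * Real.cosh t) * Real.cosh (ν * t))
      = fun t => (Real.exp (ν * t - z * Real.cosh t)
          + Real.exp (-ν * t - z * Real.cosh t)) / 2 := by
    funext t
    have e1 : Real.exp (ν * t - z * Real.cosh t)
        = Real.exp (-z * Real.cosh t) * Real.exp (ν * t) := by
      rw [← Real.exp_add]; congr 1; ring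
    have e2 : Real.exp (-ν * t - z * Real.cosh t)
        = Real.exp (-z * Real.cosh t) * Real.exp (-(ν * t)) := by
      rw [← Real.exp_add]; congr 1; ring
    rw [e1, e2, Real.cosh_eq (ν * t)]
    ring
  rw [h]
  exact ((integrable_exp_aux hz ν).add (integrable_exp_aux hz (-ν))).div_const 2

private lemma integrable_sinh_aux {z : ℝ} (hz : 0 < z) (ν : ℝ) :
    Integrable (fun t : ℝ => Real.exp (-z * Real.cosh t) * Real.sinh (ν * t)) := by
  have h : (fun t : ℝ => Real.exp (-z * Real.cosh t) * Real.sinh (ν * t))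
      = fun t => (Real.exp (ν * t - z * Real.cosh t)
          - Real.exp (-ν * t - z * Real.cosh t)) / 2 := by
    funext t
    have e1 : Real.exp (ν * t - z * Real.cosh t)
        = Real.exp (-z * Real.cosh t) * Real.exp (ν * t) := by
      rw [← Real.exp_add]; congr 1; ring
    have e2 : Real.exp (-ν * t - z * Real.cosh t)
        = Real.exp (-z * Real.cosh t) * Real.exp (-(ν * t)) := by
      rw [← Real.exp_add]; congr 1; ring
    rw [e1, e2, Real.sinh_eq (ν * t)]
    ring
  rw [h]
  exact ((integrable_exp_aux hz ν).sub (integrable_exp_aux hz (-ν))).div_const 2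

private lemma integral_even_eq {F : ℝ → ℝ} (hFeven : ∀ t, F (-t) = F t) (hF : Integrable F) :
    (∫ t : ℝ, F t) = 2 * ∫ t in Set.Ioi (0 : ℝ), F t := by
  have h0 := integral_comp_neg_Iic (0 : ℝ) F
  rw [neg_zero] at h0
  have h1 : (∫ x in Set.Iic (0 : ℝ), F (-x)) = ∫ x in Set.Iic (0 : ℝ), F x :=
    setIntegral_congr_fun measurableSet_Iic fun x _ => hFeven x
  have h2 := intervalIntegral.integral_Iic_add_Ioi (b := (0 : ℝ)) hF.integrableOn hF.integrableOn
  linarith [h0, h1, h2]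

/-- The full-line integral representation of `besselK`. -/
private lemma integral_real_eq {z : ℝ} (hz : 0 < z) (ν : ℝ) :
    (∫ t : ℝ, Real.exp (ν * t - z * Real.cosh t)) = 2 * besselK ν z := by
  have hsplit : (fun t : ℝ => Real.exp (ν * t - z * Real.cosh t))
      = fun t => Real.exp (-z * Real.cosh t) * Real.cosh (ν * t)
          + Real.exp (-z * Real.cosh t) * Real.sinh (ν * t) := by
    funext t
    rw [← mul_add, Real.cosh_add_sinh, ← Real.exp_add]
    ring_nf
  have hodd : (∫ t : ℝ, Real.exp (-z * Real.cosh t) * Real.sinh (ν * t)) = 0 := by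
    have h := integral_neg_eq_self
      (fun t : ℝ => Real.exp (-z * Real.cosh t) * Real.sinh (ν * t)) (volume : Measure ℝ)
    have h1 : (fun t : ℝ => Real.exp (-z * Real.cosh (-t)) * Real.sinh (ν * -t))
        = fun t : ℝ => -(Real.exp (-z * Real.cosh t) * Real.sinh (ν * t)) := by
      funext t
      rw [Real.cosh_neg, mul_neg, Real.sinh_neg]
      ring
    rw [show (∫ x : ℝ, Real.exp (-z * Real.cosh (-x)) * Real.sinh (ν * -x))
        = ∫ x : ℝ, -(Real.exp (-z * Real.cosh x) * Real.sinh (ν * x)) from by rw [← h1],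
      integral_neg] at h
    linarith
  have heven : (∫ t : ℝ, Real.exp (-z * Real.cosh t) * Real.cosh (ν * t))
      = 2 * besselK ν z := by
    rw [integral_even_eq (fun t => by simp only [Real.cosh_neg, mul_neg])
      (integrable_cosh_aux hz ν)]
    rfl
  rw [hsplit, integral_add (integrable_cosh_aux hz ν) (integrable_sinh_aux hz ν), hodd, heven,
    add_zero]

/-- Even/odd splitting for the outer integral. -/
private lemma besselK_split_aux (K : ℝ → ℝ) (hKeven : ∀ t, K (-t) = K t) (c : ℝ)
    (hH : Integrable (fun t : ℝ => Real.exp (c * t) * (2 * K t))) :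
    (∫ t : ℝ, Real.exp (c * t) * (2 * K t))
      = 4 * ∫ t in Set.Ioi (0 : ℝ), K t * Real.cosh (c * t) := by
  have hHneg : Integrable (fun t : ℝ => Real.exp (c * -t) * (2 * K (-t))) := hH.comp_neg
  have hEeq : (fun t : ℝ => K t * Real.cosh (c * t))
      = fun t => (Real.exp (c * t) * (2 * K t) + Real.exp (c * -t) * (2 * K (-t))) / 4 := by
    funext t
    rw [hKeven t, Real.cosh_eq, mul_neg, Real.exp_neg]
    have := (Real.exp_pos (c * t)).ne'
    field_simp
    ring
  have hOeq : (fun t : ℝ => K t * Real.sinh (c * t))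
      = fun t => (Real.exp (c * t) * (2 * K t) - Real.exp (c * -t) * (2 * K (-t))) / 4 := by
    funext t
    rw [hKeven t, Real.sinh_eq, mul_neg, Real.exp_neg]
    have := (Real.exp_pos (c * t)).ne'
    field_simp
    ring
  have hE : Integrable (fun t : ℝ => K t * Real.cosh (c * t)) := by
    rw [hEeq]; exact (hH.add hHneg).div_const 4
  have hO : Integrable (fun t : ℝ => K t * Real.sinh (c * t)) := by
    rw [hOeq]; exact (hH.sub hHneg).div_const 4
  have hOzero : (∫ t : ℝ, K t * Real.sinh (c * t)) = 0 := by
    have h := integral_neg_eq_self (fun t : ℝ => K t * Real.sinh (c * t)) (volume : Measure ℝ)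
    have h1 : (fun t : ℝ => K (-t) * Real.sinh (c * -t))
        = fun t : ℝ => -(K t * Real.sinh (c * t)) := by
      funext t
      rw [hKeven t, mul_neg, Real.sinh_neg]
      ring
    rw [show (∫ x : ℝ, K (-x) * Real.sinh (c * -x))
        = ∫ x : ℝ, -(K x * Real.sinh (c * x)) from by rw [← h1], integral_neg] at h
    linarith
  have hEsplit : (∫ t : ℝ, K t * Real.cosh (c * t))
      = 2 * ∫ t in Set.Ioi (0 : ℝ), K t * Real.cosh (c * t) :=
    integral_even_eq (fun t => by simp only [hKeven, mul_neg, Real.cosh_neg]) hE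
  have hHsplit : (fun t : ℝ => Real.exp (c * t) * (2 * K t))
      = fun t => 2 * (K t * Real.cosh (c * t)) + 2 * (K t * Real.sinh (c * t)) := by
    funext t
    rw [show (2:ℝ) * (K t * Real.cosh (c * t)) + 2 * (K t * Real.sinh (c * t))
        = 2 * K t * (Real.cosh (c * t) + Real.sinh (c * t)) from by ring,
      Real.cosh_add_sinh]
    ring
  rw [hHsplit, integral_add (hE.const_mul 2) (hO.const_mul 2), integral_const_mul,
    integral_const_mul, hOzero, hEsplit]
  ring

theorem besselK_product (z : ℝ) (hz : 0 < z) (a b : ℝ) :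
    2 * ∫ t in Set.Ioi (0 : ℝ), besselK (a + b) (2 * z * Real.cosh t) * Real.cosh ((a - b) * t)
      = besselK a z * besselK b z := by
  set f : ℝ → ℝ := fun u => Real.exp (a * u - z * Real.cosh u) with hfdef
  set g : ℝ → ℝ := fun v => Real.exp (b * v - z * Real.cosh v) with hgdef
  have hf : Integrable f := integrable_exp_aux hz a
  have hg : Integrable g := integrable_exp_aux hz b
  have hfpos : ∀ u, 0 < f u := fun u => Real.exp_pos _
  have hgpos : ∀ v, 0 < g v := fun v => Real.exp_pos _
  -- the inner substitution v = u - 2t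
  have hginner : ∀ u : ℝ, (∫ t : ℝ, g (u - 2 * t)) = 2⁻¹ * ∫ v : ℝ, g v := by
    intro u
    have h1 : (∫ t : ℝ, g (u - 2 * t)) = ∫ t : ℝ, (fun y => g (u - y)) (2 * t) := rfl
    rw [h1, Measure.integral_comp_mul_left (fun y => g (u - y)) 2,
      integral_sub_left_eq_self g _ u]
    norm_num
  -- product integrability for Fubini
  have hP : Integrable (Function.uncurry fun (u t : ℝ) => f u * g (u - 2 * t))
      ((volume : Measure ℝ).prod volume) := by
    have hc : Continuous (Function.uncurry fun (u t : ℝ) => f u * g (u - 2 * t)) := by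
      rw [hfdef, hgdef]
      apply Continuous.mul <;> fun_prop
    rw [integrable_prod_iff hc.aestronglyMeasurable]
    constructor
    · filter_upwards with u
      have h2 : Integrable (fun t : ℝ => g (u - 2 * t)) := by
        have h1 : Integrable (fun y : ℝ => g (u + y)) := hg.comp_add_left u
        have h2 := h1.comp_mul_left' (R := (-2 : ℝ)) (by norm_num)
        refine h2.congr (Filter.Eventually.of_forall fun t => ?_)
        ring_nf
      exact h2.const_mul (f u)
    · have hnorm : (fun u : ℝ => ∫ t : ℝ, ‖f u * g (u - 2 * t)‖)
          = fun u => f u * (2⁻¹ * ∫ v : ℝ, g v) := by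
        funext u
        have h3 : ∀ t : ℝ, ‖f u * g (u - 2 * t)‖ = f u * g (u - 2 * t) := fun t => by
          rw [Real.norm_eq_abs, abs_of_pos (mul_pos (hfpos u) (hgpos _))]
        simp_rw [h3]
        rw [integral_const_mul, hginner u]
      rw [show (fun u : ℝ => ∫ t : ℝ, ‖Function.uncurry
            (fun (u t : ℝ) => f u * g (u - 2 * t)) (u, t)‖)
          = fun u : ℝ => ∫ t : ℝ, ‖f u * g (u - 2 * t)‖ from rfl, hnorm]
      exact hf.mul_const _
  -- value of the inner u-integral after swapping
  have hKpos : ∀ t : ℝ, 0 < 2 * z * Real.cosh t := fun t =>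
    mul_pos (by linarith) (Real.cosh_pos t)
  have step2 : ∀ t : ℝ, (∫ u : ℝ, f u * g (u - 2 * t))
      = Real.exp ((a - b) * t) * (2 * besselK (a + b) (2 * z * Real.cosh t)) := by
    intro t
    rw [← integral_add_right_eq_self (fun u => f u * g (u - 2 * t)) t]
    have hpt : ∀ s : ℝ, f (s + t) * g (s + t - 2 * t)
        = Real.exp ((a - b) * t)
          * Real.exp ((a + b) * s - 2 * z * Real.cosh t * Real.cosh s) := by
      intro s
      have hst : s + t - 2 * t = s - t := by ring
      rw [hst]
      simp only [hfdef, hgdef]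
      rw [← Real.exp_add, ← Real.exp_add]
      congr 1
      rw [Real.cosh_add, Real.cosh_sub]
      ring
    simp_rw [hpt]
    rw [integral_const_mul, integral_real_eq (hKpos t) (a + b)]
  -- Fubini
  have hswap : (∫ u : ℝ, ∫ t : ℝ, f u * g (u - 2 * t))
      = ∫ t : ℝ, ∫ u : ℝ, f u * g (u - 2 * t) :=
    integral_integral_swap hP
  -- value of the iterated integral in the original order
  have hlhs : (∫ u : ℝ, ∫ t : ℝ, f u * g (u - 2 * t))
      = 2⁻¹ * ((∫ u : ℝ, f u) * ∫ v : ℝ, g v) := by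
    have h4 : ∀ u : ℝ, (∫ t : ℝ, f u * g (u - 2 * t)) = f u * (2⁻¹ * ∫ v : ℝ, g v) := by
      intro u
      rw [integral_const_mul, hginner u]
    simp_rw [h4]
    rw [integral_mul_const]
    ring
  -- value of the iterated integral in the swapped order
  have hH : Integrable (fun t : ℝ => Real.exp ((a - b) * t)
      * (2 * besselK (a + b) (2 * z * Real.cosh t))) := by
    have h0 := hP.integral_prod_right
    refine h0.congr (Filter.Eventually.of_forall fun t => ?_)
    exact step2 t
  have hrhs : (∫ t : ℝ, ∫ u : ℝ, f u * g (u - 2 * t))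
      = 4 * ∫ t in Set.Ioi (0 : ℝ),
          besselK (a + b) (2 * z * Real.cosh t) * Real.cosh ((a - b) * t) := by
    simp_rw [step2]
    exact besselK_split_aux (fun t => besselK (a + b) (2 * z * Real.cosh t))
      (fun t => by simp only [Real.cosh_neg]) (a - b) hH
  have hA : (∫ u : ℝ, f u) = 2 * besselK a z := integral_real_eq hz a
  have hB : (∫ v : ℝ, g v) = 2 * besselK b z := integral_real_eq hz b
  have hkey := hlhs.symm.trans (hswap.trans hrhs)
  rw [hA, hB] at hkey
  linarith [hkey]
end

section
/- Let q : (0,∞) → ℝ, let λ, μ > 0, and let b > 0 be such that x ↦ e^{−zx}·q(x) is integrable on (0,∞) for every z ≥ b. Suppose q has the asymptotic expansion with coefficients (a_n): for every M ∈ ℕ, q(x) − Σ_{n=0}^{M−1} a_n·x^{(n+λ−μ)/μ} = O(x^{(M+λ−μ)/μ}) as x → 0⁺. Then for every M ∈ ℕ, ∫_0^∞ e^{−zx}·q(x) dx − Σ_{n=0}^{M−1} Γ((n+λ)/μ)·a_n·z^{−(n+λ)/μ} = O(z^{−(M+λ)/μ}) as z → ∞. -/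
open Real MeasureTheory Filter Asymptotics Topology Finset

lemma myIntOn {s z : ℝ} (hs : 0 < s) (hz : 0 < z) :
    IntegrableOn (fun x : ℝ => Real.exp (-z*x) * x ^ (s-1)) (Set.Ioi 0) := by
  have h := integrableOn_rpow_mul_exp_neg_mul_rpow (s := s-1) (p := 1) (b := z)
    (by linarith) one_pos hz
  refine h.congr_fun (fun x hx => ?_) measurableSet_Ioi
  simp only [rpow_one]; ring

lemma myIntEq {s z : ℝ} (hs : 0 < s) (hz : 0 < z) :
    ∫ x in Set.Ioi (0:ℝ), Real.exp (-z*x) * x ^ (s-1) = Real.Gamma s * z ^ (-s) := by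
  have h := Real.integral_rpow_mul_exp_neg_mul_Ioi hs hz
  rw [show (∫ x in Set.Ioi (0:ℝ), Real.exp (-z*x) * x ^ (s-1))
      = ∫ t in Set.Ioi (0:ℝ), t ^ (s-1) * Real.exp (-(z*t)) from
    setIntegral_congr_fun measurableSet_Ioi (fun x _ => by rw [neg_mul]; ring), h,
    one_div, ← Real.rpow_neg_one z, ← Real.rpow_mul hz.le, neg_one_mul, mul_comm]

lemma myExpO (δ s : ℝ) (hδ : 0 < δ) :
    (fun z : ℝ => Real.exp (-δ*z)) =O[atTop] fun z : ℝ => z ^ (-s) := by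
  have h := tendsto_rpow_mul_exp_neg_mul_atTop_nhds_zero s δ hδ
  have h2 : (fun x : ℝ => x ^ s * Real.exp (-δ*x)) =O[atTop] (fun _ => (1:ℝ)) :=
    h.isBigO_one ℝ
  have h3 := (isBigO_refl (fun z : ℝ => z ^ (-s)) atTop).mul h2
  refine h3.congr' ?_ (by simp)
  filter_upwards [eventually_gt_atTop (0:ℝ)] with z hz
  rw [← mul_assoc, ← Real.rpow_add hz, neg_add_cancel, Real.rpow_zero, one_mul]

lemma myTail (f : ℝ → ℝ) (c δ : ℝ) (hδ : 0 < δ)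
    (hf : IntegrableOn (fun x => Real.exp (-c*x) * f x) (Set.Ioi 0)) :
    (fun z : ℝ => ∫ x in Set.Ioi δ, Real.exp (-z*x) * f x) =O[atTop]
      fun z : ℝ => Real.exp (-δ*z) := by
  set g : ℝ → ℝ := fun x => Real.exp (-c*x) * f x with hg_def
  have hg : IntegrableOn g (Set.Ioi δ) := hf.mono_set (Set.Ioi_subset_Ioi hδ.le)
  set K : ℝ := ∫ x in Set.Ioi δ, ‖g x‖ with hK_def
  rw [isBigO_iff]
  refine ⟨Real.exp (c*δ) * K, ?_⟩
  filter_upwards [eventually_ge_atTop c] with z hz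
  have heq : (fun x => Real.exp (-z*x) * f x) = fun x => Real.exp (-(z-c)*x) * g x := by
    funext x
    rw [hg_def, ← mul_assoc, ← Real.exp_add]
    ring_nf
  have hmeas : AEStronglyMeasurable (fun x => Real.exp (-(z-c)*x) * g x)
      (volume.restrict (Set.Ioi δ)) :=
    ((Real.continuous_exp.comp (continuous_const.mul continuous_id)).aestronglyMeasurable).mul
      hg.1
  have hbound : ∀ᵐ x ∂volume.restrict (Set.Ioi δ),
      ‖Real.exp (-(z-c)*x) * g x‖ ≤ Real.exp (-(z-c)*δ) * ‖g x‖ := by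
    rw [ae_restrict_iff' measurableSet_Ioi]
    refine ae_of_all _ (fun x hx => ?_)
    rw [norm_mul, Real.norm_eq_abs, abs_of_pos (Real.exp_pos _)]
    have : Real.exp (-(z-c)*x) ≤ Real.exp (-(z-c)*δ) := by
      apply Real.exp_le_exp.mpr
      nlinarith [le_of_lt (Set.mem_Ioi.mp hx)]
    exact mul_le_mul_of_nonneg_right this (norm_nonneg _)
  have hInt : IntegrableOn (fun x => Real.exp (-(z-c)*x) * g x) (Set.Ioi δ) :=
    Integrable.mono' (hg.norm.const_mul (Real.exp (-(z-c)*δ))) hmeas hbound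
  rw [heq]
  calc ‖∫ x in Set.Ioi δ, Real.exp (-(z-c)*x) * g x‖
      ≤ ∫ x in Set.Ioi δ, ‖Real.exp (-(z-c)*x) * g x‖ := norm_integral_le_integral_norm _
    _ ≤ ∫ x in Set.Ioi δ, Real.exp (-(z-c)*δ) * ‖g x‖ :=
        integral_mono_ae hInt.norm (hg.norm.const_mul _) hbound
    _ = Real.exp (-(z-c)*δ) * K := by rw [MeasureTheory.integral_const_mul]
    _ ≤ Real.exp (c*δ) * K * ‖Real.exp (-δ*z)‖ := by
        rw [Real.norm_eq_abs, abs_of_pos (Real.exp_pos _)]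
        have h5 : Real.exp (-(z-c)*δ) = Real.exp (c*δ) * Real.exp (-δ*z) := by
          rw [← Real.exp_add]; ring_nf
        rw [h5]; ring_nf; exact le_refl _

theorem laplace_method
    (q : ℝ → ℝ) (lam mu b : ℝ) (hlam : 0 < lam) (hmu : 0 < mu) (hb : 0 < b)
    (a : ℕ → ℝ)
    (hint : ∀ z : ℝ, b ≤ z →
      IntegrableOn (fun x => Real.exp (-z * x) * q x) (Set.Ioi 0))
    (hasymp : ∀ M : ℕ,
      (fun x : ℝ => q x - ∑ n ∈ Finset.range M, a n * x ^ (((n : ℝ) + lam - mu) / mu))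
        =O[𝓝[>] 0] fun x : ℝ => x ^ (((M : ℝ) + lam - mu) / mu)) :
    ∀ M : ℕ,
      (fun z : ℝ => (∫ x in Set.Ioi (0 : ℝ), Real.exp (-z * x) * q x) -
          ∑ n ∈ Finset.range M,
            Real.Gamma (((n : ℝ) + lam) / mu) * a n * z ^ (-(((n : ℝ) + lam) / mu)))
        =O[atTop] fun z : ℝ => z ^ (-(((M : ℝ) + lam) / mu)) := by
  intro M
  have hexp : ∀ t : ℝ, (t + lam - mu) / mu = (t + lam) / mu - 1 := by
    intro t; field_simp
  set s : ℝ := ((M : ℝ) + lam) / mu with hs_def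
  have hs : 0 < s := by positivity
  set r : ℝ → ℝ :=
    fun x => q x - ∑ n ∈ Finset.range M, a n * x ^ (((n : ℝ) + lam - mu) / mu) with hr_def
  -- extract constants from the asymptotic hypothesis
  obtain ⟨C, hC⟩ := isBigO_iff.mp (hasymp M)
  rw [eventually_nhdsWithin_iff, Metric.eventually_nhds_iff] at hC
  obtain ⟨ε, hε, hC⟩ := hC
  set δ : ℝ := ε / 2 with hδ_def
  have hδ : 0 < δ := by positivity
  set c : ℝ := max b 1 with hc_def
  have hc0 : (0:ℝ) < c := lt_of_lt_of_le one_pos (le_max_right b 1)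
  have hbc : b ≤ c := le_max_left b 1
  -- pointwise bound on (0, δ]
  have hCbound : ∀ x ∈ Set.Ioc (0:ℝ) δ, ‖r x‖ ≤ |C| * x ^ (s - 1) := by
    intro x hx
    have hx0 : 0 < x := hx.1
    have hd : dist x 0 < ε := by
      rw [Real.dist_eq, sub_zero, abs_of_pos hx0]
      have := hx.2
      rw [hδ_def] at this
      linarith
    have h1 := hC hd (Set.mem_Ioi.mpr hx0)
    have h2 : ‖x ^ (((M : ℝ) + lam - mu) / mu)‖ = x ^ (s - 1) := by
      rw [Real.norm_eq_abs, abs_of_pos (Real.rpow_pos_of_pos hx0 _), hexp]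
    calc ‖r x‖ ≤ C * ‖x ^ (((M : ℝ) + lam - mu) / mu)‖ := h1
      _ ≤ |C| * ‖x ^ (((M : ℝ) + lam - mu) / mu)‖ :=
          mul_le_mul_of_nonneg_right (le_abs_self C) (norm_nonneg _)
      _ = |C| * x ^ (s - 1) := by rw [h2]
  -- integrability of the power functions
  have hpow_int : ∀ (n : ℕ) (z : ℝ), 0 < z →
      IntegrableOn (fun x => Real.exp (-z*x) * x ^ (((n : ℝ) + lam - mu) / mu))
        (Set.Ioi 0) := by
    intro n z hz
    have h := myIntOn (s := ((n : ℝ) + lam) / mu) (by positivity) hz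
    simp only [hexp]
    exact h
  have hpow_eq : ∀ (n : ℕ) (z : ℝ), 0 < z →
      (∫ x in Set.Ioi (0:ℝ), Real.exp (-z*x) * x ^ (((n : ℝ) + lam - mu) / mu))
        = Real.Gamma (((n : ℝ) + lam) / mu) * z ^ (-(((n : ℝ) + lam) / mu)) := by
    intro n z hz
    have h := myIntEq (s := ((n : ℝ) + lam) / mu) (by positivity) hz
    simp only [hexp]
    exact h
  -- pointwise expansion of the remainder
  have hrexp : ∀ (z x : ℝ), Real.exp (-z*x) * r x =
      Real.exp (-z*x) * q x -
        ∑ n ∈ Finset.range M, a n * (Real.exp (-z*x) * x ^ (((n : ℝ) + lam - mu) / mu)) := by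
    intro z x
    rw [hr_def]
    simp only [mul_sub, Finset.mul_sum]
    congr 1
    exact Finset.sum_congr rfl (fun n _ => by ring)
  have hsum_int : ∀ z : ℝ, 0 < z →
      IntegrableOn (fun x => ∑ n ∈ Finset.range M,
        a n * (Real.exp (-z*x) * x ^ (((n : ℝ) + lam - mu) / mu))) (Set.Ioi 0) :=
    fun z hz => integrable_finset_sum _ (fun n _ => (hpow_int n z hz).const_mul (a n))
  -- integrability of the remainder integrand
  have hr_int : ∀ z : ℝ, c ≤ z →
      IntegrableOn (fun x => Real.exp (-z*x) * r x) (Set.Ioi 0) := by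
    intro z hz
    have hz0 : 0 < z := lt_of_lt_of_le hc0 hz
    refine MeasureTheory.IntegrableOn.congr_fun
      ((hint z (hbc.trans hz)).sub (hsum_int z hz0)) (fun x _ => ?_) measurableSet_Ioi
    simp only [Pi.sub_apply]
    exact (hrexp z x).symm
  -- splitting the Laplace transform
  have hsplit : ∀ z : ℝ, c ≤ z →
      (∫ x in Set.Ioi (0:ℝ), Real.exp (-z * x) * q x) -
        ∑ n ∈ Finset.range M,
          Real.Gamma (((n : ℝ) + lam) / mu) * a n * z ^ (-(((n : ℝ) + lam) / mu))
      = ∫ x in Set.Ioi (0:ℝ), Real.exp (-z*x) * r x := by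
    intro z hz
    have hz0 : 0 < z := lt_of_lt_of_le hc0 hz
    rw [show (fun x => Real.exp (-z*x) * r x)
        = fun x => Real.exp (-z*x) * q x -
            ∑ n ∈ Finset.range M,
              a n * (Real.exp (-z*x) * x ^ (((n : ℝ) + lam - mu) / mu))
      from funext (hrexp z)]
    rw [integral_sub (hint z (hbc.trans hz)) (hsum_int z hz0),
      integral_finset_sum _ (fun n _ => (hpow_int n z hz0).const_mul (a n))]
    congr 1
    refine Finset.sum_congr rfl (fun n hn => ?_)
    rw [MeasureTheory.integral_const_mul, hpow_eq n z hz0]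
    ring
  -- splitting the domain
  have hsplit2 : ∀ z : ℝ, c ≤ z →
      (∫ x in Set.Ioi (0:ℝ), Real.exp (-z*x) * r x)
      = (∫ x in Set.Ioc (0:ℝ) δ, Real.exp (-z*x) * r x)
        + ∫ x in Set.Ioi δ, Real.exp (-z*x) * r x := by
    intro z hz
    rw [← MeasureTheory.setIntegral_union (Set.Ioc_disjoint_Ioi le_rfl) measurableSet_Ioi
      ((hr_int z hz).mono_set Set.Ioc_subset_Ioi_self)
      ((hr_int z hz).mono_set (Set.Ioi_subset_Ioi hδ.le)),
      Set.Ioc_union_Ioi_eq_Ioi hδ.le]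
  -- bound on the near part
  have hT1 : (fun z : ℝ => ∫ x in Set.Ioc (0:ℝ) δ, Real.exp (-z*x) * r x)
      =O[atTop] fun z : ℝ => z ^ (-s) := by
    rw [isBigO_iff]
    refine ⟨|C| * Real.Gamma s, ?_⟩
    filter_upwards [eventually_ge_atTop c, eventually_gt_atTop (0:ℝ)] with z hz hz0
    have hIocInt : IntegrableOn (fun x => Real.exp (-z*x) * r x) (Set.Ioc 0 δ) :=
      (hr_int z hz).mono_set Set.Ioc_subset_Ioi_self
    have hMajInt : IntegrableOn (fun x => |C| * (Real.exp (-z*x) * x ^ (s-1)))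
        (Set.Ioi (0:ℝ)) := (myIntOn hs hz0).const_mul |C|
    calc ‖∫ x in Set.Ioc (0:ℝ) δ, Real.exp (-z*x) * r x‖
        ≤ ∫ x in Set.Ioc (0:ℝ) δ, ‖Real.exp (-z*x) * r x‖ :=
          norm_integral_le_integral_norm _
      _ ≤ ∫ x in Set.Ioc (0:ℝ) δ, |C| * (Real.exp (-z*x) * x ^ (s-1)) := by
          refine setIntegral_mono_on hIocInt.norm
            (hMajInt.mono_set Set.Ioc_subset_Ioi_self) measurableSet_Ioc (fun x hx => ?_)
          rw [norm_mul, Real.norm_eq_abs (Real.exp _), abs_of_pos (Real.exp_pos _)]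
          calc Real.exp (-z*x) * ‖r x‖
              ≤ Real.exp (-z*x) * (|C| * x ^ (s-1)) :=
                mul_le_mul_of_nonneg_left (hCbound x hx) (Real.exp_pos _).le
            _ = |C| * (Real.exp (-z*x) * x ^ (s-1)) := by ring
      _ ≤ ∫ x in Set.Ioi (0:ℝ), |C| * (Real.exp (-z*x) * x ^ (s-1)) := by
          refine setIntegral_mono_set hMajInt ?_
            (HasSubset.Subset.eventuallyLE Set.Ioc_subset_Ioi_self)
          rw [EventuallyLE, ae_restrict_iff' measurableSet_Ioi]
          refine ae_of_all _ (fun x hx => ?_)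
          have hx0 : (0:ℝ) < x := Set.mem_Ioi.mp hx
          have := Real.rpow_pos_of_pos hx0 (s-1)
          have := Real.exp_pos (-z*x)
          positivity
      _ = |C| * Real.Gamma s * ‖z ^ (-s)‖ := by
          rw [MeasureTheory.integral_const_mul, myIntEq hs hz0, Real.norm_eq_abs,
            abs_of_pos (Real.rpow_pos_of_pos hz0 _)]
          ring
  -- bound on the far part
  have hT2 : (fun z : ℝ => ∫ x in Set.Ioi δ, Real.exp (-z*x) * r x)
      =O[atTop] fun z : ℝ => z ^ (-s) :=
    (myTail r c δ hδ (hr_int c le_rfl)).trans (myExpO δ s hδ)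
  refine (hT1.add hT2).congr' ?_ EventuallyEq.rfl
  filter_upwards [eventually_ge_atTop c] with z hz
  exact ((hsplit z hz).trans (hsplit2 z hz)).symm
end

section
/- For every N ∈ ℕ, ν ∈ ℝ and every real z > 0, F_ν^{N+2}(z) = (d²/dz²)F_ν^N(z) + (1/z)·(d/dz)F_ν^N(z) − (ν²/z²)·F_ν^N(z), where the derivatives are taken with respect to z on (0,∞). -/
open Real MeasureTheory

/-- `F_ν^N(z) = ∫_0^∞ cosh^N(t) K_ν(z cosh t) dt`. -/
noncomputable def F (N : ℕ) (ν : ℝ) (z : ℝ) : ℝ :=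
  ∫ t in Set.Ioi (0 : ℝ), Real.cosh t ^ N * besselK ν (z * Real.cosh t)

open Set Filter Asymptotics Metric Topology

namespace FRec


lemma half_exp_le_cosh (t : ℝ) : Real.exp t / 2 ≤ Real.cosh t := by
  rw [Real.cosh_eq]
  have := (Real.exp_pos (-t)).le
  linarith

lemma cosh_le_exp_of_nonneg {t : ℝ} (ht : 0 ≤ t) : Real.cosh t ≤ Real.exp t := by
  rw [Real.cosh_eq]
  have : Real.exp (-t) ≤ Real.exp t := Real.exp_le_exp.2 (by linarith)
  linarith [Real.exp_pos (-t)]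

lemma cosh_mul_le_exp {μ t : ℝ} (ht : 0 ≤ t) : Real.cosh (μ * t) ≤ Real.exp (|μ| * t) := by
  have h1 : Real.cosh (μ * t) = Real.cosh (|μ * t|) := (Real.cosh_abs _).symm
  rw [h1, abs_mul, abs_of_nonneg ht]
  exact cosh_le_exp_of_nonneg (by positivity)

lemma abs_sinh_le_cosh (t : ℝ) : |Real.sinh t| ≤ Real.cosh t := by
  rw [abs_le, Real.cosh_eq, Real.sinh_eq]
  constructor <;> nlinarith [Real.exp_pos t, Real.exp_pos (-t)]

/-- master pointwise bound -/
lemma psi_le (k : ℕ) (μ : ℝ) {c : ℝ} (hc : 0 < c) {t : ℝ} (ht : 0 ≤ t) :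
    Real.cosh t ^ k * Real.cosh (μ * t) * Real.exp (-(c * Real.cosh t))
      ≤ Real.exp (((k : ℝ) + |μ|) * t) * Real.exp (-(c / 2) * Real.exp t) := by
  have h1 : Real.cosh t ^ k ≤ Real.exp ((k : ℝ) * t) := by
    calc Real.cosh t ^ k ≤ Real.exp t ^ k :=
          pow_le_pow_left₀ (Real.cosh_pos t).le (cosh_le_exp_of_nonneg ht) k
      _ = Real.exp ((k : ℝ) * t) := (Real.exp_nat_mul t k).symm
  have h2 : Real.cosh (μ * t) ≤ Real.exp (|μ| * t) := cosh_mul_le_exp ht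
  have h3 : Real.exp (-(c * Real.cosh t)) ≤ Real.exp (-(c / 2) * Real.exp t) := by
    apply Real.exp_le_exp.2
    nlinarith [half_exp_le_cosh t]
  calc Real.cosh t ^ k * Real.cosh (μ * t) * Real.exp (-(c * Real.cosh t))
      ≤ Real.exp ((k : ℝ) * t) * Real.exp (|μ| * t) * Real.exp (-(c / 2) * Real.exp t) := by
        apply mul_le_mul _ h3 (Real.exp_pos _).le (by positivity)
        exact mul_le_mul h1 h2 (Real.cosh_pos _).le (Real.exp_pos _).le
    _ = Real.exp (((k : ℝ) + |μ|) * t) * Real.exp (-(c / 2) * Real.exp t) := by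
        rw [← Real.exp_add, add_mul]

lemma tendsto_exp_aux (A : ℝ) {c : ℝ} (hc : 0 < c) :
    Tendsto (fun t => Real.exp (A * t) * Real.exp (-c * Real.exp t)) atTop (𝓝 0) := by
  have h := (tendsto_rpow_mul_exp_neg_mul_atTop_nhds_zero A c hc).comp Real.tendsto_exp_atTop
  refine h.congr fun t => ?_
  simp only [Function.comp_apply]
  rw [Real.rpow_def_of_pos (Real.exp_pos t), Real.log_exp, mul_comm t A]

/-- general decay with extra exponential factor -/
lemma tendsto_exp_mul_psi (k : ℕ) (μ b : ℝ) {c : ℝ} (hc : 0 < c) :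
    Tendsto (fun t => Real.exp (b * t) *
      (Real.cosh t ^ k * Real.cosh (μ * t) * Real.exp (-(c * Real.cosh t)))) atTop (𝓝 0) := by
  apply squeeze_zero' (g := fun t => Real.exp ((b + ((k : ℝ) + |μ|)) * t) * Real.exp (-(c/2) * Real.exp t))
  · filter_upwards with t; positivity
  · filter_upwards [eventually_ge_atTop (0:ℝ)] with t ht
    rw [add_mul, Real.exp_add]
    calc Real.exp (b * t) * (Real.cosh t ^ k * Real.cosh (μ * t) * Real.exp (-(c * Real.cosh t)))
        ≤ Real.exp (b * t) * (Real.exp (((k:ℝ) + |μ|) * t) * Real.exp (-(c/2) * Real.exp t)) :=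
          mul_le_mul_of_nonneg_left (psi_le k μ hc ht) (Real.exp_pos _).le
      _ = Real.exp (b * t) * Real.exp (((k:ℝ) + |μ|) * t) * Real.exp (-(c/2) * Real.exp t) := by ring
  · exact tendsto_exp_aux _ (by positivity)

lemma tendsto_psi (k : ℕ) (μ : ℝ) {c : ℝ} (hc : 0 < c) :
    Tendsto (fun t => Real.cosh t ^ k * Real.cosh (μ * t) * Real.exp (-(c * Real.cosh t)))
      atTop (𝓝 0) := by
  have := tendsto_exp_mul_psi k μ 0 hc
  simpa using this

lemma integrableOn_psi (k : ℕ) (μ : ℝ) {c : ℝ} (hc : 0 < c) :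
    IntegrableOn (fun t => Real.cosh t ^ k * Real.cosh (μ * t) * Real.exp (-(c * Real.cosh t)))
      (Ioi (0:ℝ)) := by
  apply integrable_of_isBigO_exp_neg (b := 1) one_pos
  · apply Continuous.continuousOn; fun_prop
  · rw [isBigO_iff]
    refine ⟨1, ?_⟩
    have h := tendsto_exp_mul_psi k μ 1 hc
    have h2 := h.eventually (eventually_le_nhds (show (0:ℝ) < 1 by norm_num))
    filter_upwards [h2, eventually_ge_atTop (0:ℝ)] with t ht ht0
    have hpos : (0:ℝ) ≤ Real.cosh t ^ k * Real.cosh (μ * t) * Real.exp (-(c * Real.cosh t)) := by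
      positivity
    rw [Real.norm_eq_abs, Real.norm_eq_abs, abs_of_nonneg hpos,
      abs_of_nonneg (Real.exp_pos _).le]
    have : Real.exp (1 * t) * (Real.cosh t ^ k * Real.cosh (μ * t) *
        Real.exp (-(c * Real.cosh t))) ≤ 1 := ht
    have het : (0:ℝ) < Real.exp t := Real.exp_pos t
    have h3 : Real.cosh t ^ k * Real.cosh (μ * t) * Real.exp (-(c * Real.cosh t)) * Real.exp t ≤ 1 := by
      rw [mul_comm]; rw [one_mul] at this; exact this
    calc Real.cosh t ^ k * Real.cosh (μ * t) * Real.exp (-(c * Real.cosh t))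
        = Real.cosh t ^ k * Real.cosh (μ * t) * Real.exp (-(c * Real.cosh t)) * Real.exp t
            * Real.exp (-1 * t) := by
          rw [mul_assoc _ (Real.exp t), ← Real.exp_add]; simp
      _ ≤ 1 * Real.exp (-1 * t) := mul_le_mul_of_nonneg_right h3 (Real.exp_pos _).le


lemma key_ode (ν : ℝ) {a : ℝ} (ha : 0 < a) :
    ∫ s in Ioi (0:ℝ), Real.cosh s ^ 2 * Real.cosh (ν * s) * Real.exp (-(a * Real.cosh s))
      = (1 + ν ^ 2 / a ^ 2) *
          (∫ s in Ioi (0:ℝ), Real.cosh (ν * s) * Real.exp (-(a * Real.cosh s)))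
        + a⁻¹ *
          ∫ s in Ioi (0:ℝ), Real.cosh s * Real.cosh (ν * s) * Real.exp (-(a * Real.cosh s)) := by
  have i2 : IntegrableOn
      (fun s => Real.cosh s ^ 2 * Real.cosh (ν * s) * Real.exp (-(a * Real.cosh s))) (Ioi 0) :=
    integrableOn_psi 2 ν ha
  have i1 : IntegrableOn
      (fun s => Real.cosh s * Real.cosh (ν * s) * Real.exp (-(a * Real.cosh s))) (Ioi 0) := by
    have := integrableOn_psi 1 ν ha
    simpa using this
  have i0 : IntegrableOn
      (fun s => Real.cosh (ν * s) * Real.exp (-(a * Real.cosh s))) (Ioi 0) := by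
    have := integrableOn_psi 0 ν ha
    simpa using this
  set φ : ℝ → ℝ := fun s =>
    -(a⁻¹) * (Real.sinh s * Real.cosh (ν * s) * Real.exp (-(a * Real.cosh s)))
      - ν / a ^ 2 * (Real.sinh (ν * s) * Real.exp (-(a * Real.cosh s))) with hφ
  set D : ℝ → ℝ := fun s =>
    (Real.cosh s ^ 2 - 1 - a⁻¹ * Real.cosh s - ν ^ 2 / a ^ 2) *
      (Real.cosh (ν * s) * Real.exp (-(a * Real.cosh s))) with hD
  have hderiv : ∀ s : ℝ, HasDerivAt φ (D s) s := by
    intro s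
    have hE : HasDerivAt (fun s : ℝ => Real.exp (-(a * Real.cosh s)))
        (Real.exp (-(a * Real.cosh s)) * -(a * Real.sinh s)) s := by
      exact (((Real.hasDerivAt_cosh s).const_mul a).neg).exp
    have hcν : HasDerivAt (fun s : ℝ => Real.cosh (ν * s)) (Real.sinh (ν * s) * ν) s := by
      simpa using ((hasDerivAt_id s).const_mul ν).cosh
    have hsν : HasDerivAt (fun s : ℝ => Real.sinh (ν * s)) (Real.cosh (ν * s) * ν) s := by
      simpa using ((hasDerivAt_id s).const_mul ν).sinh
    have h1 : HasDerivAt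
        (fun s : ℝ => Real.sinh s * Real.cosh (ν * s) * Real.exp (-(a * Real.cosh s)))
        ((Real.cosh s * Real.cosh (ν * s) + Real.sinh s * (Real.sinh (ν * s) * ν)) *
            Real.exp (-(a * Real.cosh s))
          + Real.sinh s * Real.cosh (ν * s) *
              (Real.exp (-(a * Real.cosh s)) * -(a * Real.sinh s))) s :=
      ((Real.hasDerivAt_sinh s).mul hcν).mul hE
    have h2 : HasDerivAt (fun s : ℝ => Real.sinh (ν * s) * Real.exp (-(a * Real.cosh s)))
        (Real.cosh (ν * s) * ν * Real.exp (-(a * Real.cosh s))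
          + Real.sinh (ν * s) * (Real.exp (-(a * Real.cosh s)) * -(a * Real.sinh s))) s :=
      hsν.mul hE
    have h := (h1.const_mul (-(a⁻¹))).sub (h2.const_mul (ν / a ^ 2))
    refine h.congr_deriv ?_
    symm
    have hs2 : Real.sinh s ^ 2 = Real.cosh s ^ 2 - 1 := Real.sinh_sq s
    have ha' : a ≠ 0 := ne_of_gt ha
    simp only [hD]
    field_simp
    linear_combination (-(a ^ 2) * Real.cosh (ν * s)) * hs2
  have hφ0 : Tendsto φ atTop (𝓝 0) := by
    have hX : Tendsto (fun s => Real.sinh s * Real.cosh (ν * s) * Real.exp (-(a * Real.cosh s)))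
        atTop (𝓝 0) := by
      apply squeeze_zero_norm _ (tendsto_psi 1 ν ha)
      intro s
      have hb : |Real.sinh s| ≤ Real.cosh s := abs_sinh_le_cosh s
      have heq : ‖Real.sinh s * Real.cosh (ν * s) * Real.exp (-(a * Real.cosh s))‖
          = |Real.sinh s| * (Real.cosh (ν * s) * Real.exp (-(a * Real.cosh s))) := by
        rw [Real.norm_eq_abs, abs_mul, abs_mul, abs_of_nonneg (Real.cosh_pos _).le,
          abs_of_nonneg (Real.exp_pos _).le, mul_assoc]
      rw [heq]
      calc |Real.sinh s| * (Real.cosh (ν * s) * Real.exp (-(a * Real.cosh s)))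
          ≤ Real.cosh s * (Real.cosh (ν * s) * Real.exp (-(a * Real.cosh s))) :=
            mul_le_mul_of_nonneg_right hb (by positivity)
        _ = Real.cosh s ^ 1 * Real.cosh (ν * s) * Real.exp (-(a * Real.cosh s)) := by ring
    have hY : Tendsto (fun s => Real.sinh (ν * s) * Real.exp (-(a * Real.cosh s)))
        atTop (𝓝 0) := by
      apply squeeze_zero_norm _ (tendsto_psi 0 ν ha)
      intro s
      have hb : |Real.sinh (ν * s)| ≤ Real.cosh (ν * s) := abs_sinh_le_cosh _
      have heq : ‖Real.sinh (ν * s) * Real.exp (-(a * Real.cosh s))‖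
          = |Real.sinh (ν * s)| * Real.exp (-(a * Real.cosh s)) := by
        rw [Real.norm_eq_abs, abs_mul, abs_of_nonneg (Real.exp_pos _).le]
      rw [heq]
      calc |Real.sinh (ν * s)| * Real.exp (-(a * Real.cosh s))
          ≤ Real.cosh (ν * s) * Real.exp (-(a * Real.cosh s)) :=
            mul_le_mul_of_nonneg_right hb (Real.exp_pos _).le
        _ = Real.cosh s ^ 0 * Real.cosh (ν * s) * Real.exp (-(a * Real.cosh s)) := by ring
    have h := (hX.const_mul (-(a⁻¹))).sub (hY.const_mul (ν / a ^ 2))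
    rw [hφ]
    simpa [neg_mul] using h
  have hDint : IntegrableOn D (Ioi (0:ℝ)) := by
    have h := ((i2.sub i0).sub (i1.const_mul a⁻¹)).sub (i0.const_mul (ν ^ 2 / a ^ 2))
    apply h.congr
    filter_upwards with s
    simp only [Pi.sub_apply, hD]; ring
  have hint : ∫ s in Ioi (0:ℝ), D s = 0 - φ 0 :=
    integral_Ioi_of_hasDerivAt_of_tendsto' (fun x _ => hderiv x) hDint hφ0
  have hφzero : φ 0 = 0 := by simp [hφ]
  rw [hφzero, sub_zero] at hint
  have hA1 : Integrable (fun s : ℝ => a⁻¹ *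
      (Real.cosh s * Real.cosh (ν * s) * Real.exp (-(a * Real.cosh s))))
      (volume.restrict (Ioi 0)) := i1.const_mul _
  have hB0 : Integrable (fun s : ℝ => ν ^ 2 / a ^ 2 *
      (Real.cosh (ν * s) * Real.exp (-(a * Real.cosh s))))
      (volume.restrict (Ioi 0)) := i0.const_mul _
  have hA2 : Integrable (fun s : ℝ =>
      Real.cosh s ^ 2 * Real.cosh (ν * s) * Real.exp (-(a * Real.cosh s))
        - Real.cosh (ν * s) * Real.exp (-(a * Real.cosh s))) (volume.restrict (Ioi 0)) :=
    i2.sub i0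
  have hA3 : Integrable (fun s : ℝ =>
      Real.cosh s ^ 2 * Real.cosh (ν * s) * Real.exp (-(a * Real.cosh s))
        - Real.cosh (ν * s) * Real.exp (-(a * Real.cosh s))
        - a⁻¹ * (Real.cosh s * Real.cosh (ν * s) * Real.exp (-(a * Real.cosh s))))
      (volume.restrict (Ioi 0)) := hA2.sub hA1
  have hsplit : ∫ s in Ioi (0:ℝ), D s
      = (∫ s in Ioi (0:ℝ), Real.cosh s ^ 2 * Real.cosh (ν * s) * Real.exp (-(a * Real.cosh s)))
        - (∫ s in Ioi (0:ℝ), Real.cosh (ν * s) * Real.exp (-(a * Real.cosh s)))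
        - a⁻¹ * (∫ s in Ioi (0:ℝ),
            Real.cosh s * Real.cosh (ν * s) * Real.exp (-(a * Real.cosh s)))
        - ν ^ 2 / a ^ 2 *
            (∫ s in Ioi (0:ℝ), Real.cosh (ν * s) * Real.exp (-(a * Real.cosh s))) := by
    calc ∫ s in Ioi (0:ℝ), D s
        = ∫ s in Ioi (0:ℝ),
            (Real.cosh s ^ 2 * Real.cosh (ν * s) * Real.exp (-(a * Real.cosh s))
              - Real.cosh (ν * s) * Real.exp (-(a * Real.cosh s))
              - a⁻¹ * (Real.cosh s * Real.cosh (ν * s) * Real.exp (-(a * Real.cosh s)))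
              - ν ^ 2 / a ^ 2 * (Real.cosh (ν * s) * Real.exp (-(a * Real.cosh s)))) :=
          setIntegral_congr_fun measurableSet_Ioi (fun s _ => by simp only [hD]; ring)
      _ = _ := by
          rw [integral_sub hA3 hB0, integral_sub hA2 hA1, integral_sub i2 i0,
            integral_const_mul, integral_const_mul]
  rw [hsplit] at hint
  linarith


noncomputable def μ2 : Measure (ℝ × ℝ) :=
  (volume.restrict (Ioi (0:ℝ))).prod (volume.restrict (Ioi (0:ℝ)))

noncomputable def G (ν z : ℝ) (i j : ℕ) : ℝ :=
  ∫ p : ℝ × ℝ, Real.cosh p.1 ^ i * Real.cosh p.2 ^ j * Real.cosh (ν * p.2) *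
    Real.exp (-(z * Real.cosh p.1 * Real.cosh p.2)) ∂μ2

lemma ae_mem_μ2 : ∀ᵐ p : ℝ × ℝ ∂μ2, 0 < p.1 ∧ 0 < p.2 := by
  rw [μ2, Measure.prod_restrict]
  filter_upwards [ae_restrict_mem (measurableSet_Ioi.prod measurableSet_Ioi)] with p hp
  exact ⟨hp.1, hp.2⟩

lemma prod_bound_integrable (i j : ℕ) (ν : ℝ) {c : ℝ} (hc : 0 < c) :
    Integrable (fun p : ℝ × ℝ =>
      (Real.cosh p.1 ^ i * Real.cosh (0 * p.1) * Real.exp (-(c * Real.cosh p.1)))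
        * (Real.cosh p.2 ^ j * Real.cosh (ν * p.2) * Real.exp (-(c * Real.cosh p.2)))) μ2 :=
  (integrableOn_psi i 0 hc).mul_prod (integrableOn_psi j ν hc)

lemma integrand_le (i j : ℕ) (ν : ℝ) {c w : ℝ} (hc : 0 < c) (hw : c ≤ w) (t s : ℝ) :
    Real.cosh t ^ i * Real.cosh s ^ j * Real.cosh (ν * s) *
        Real.exp (-(w * Real.cosh t * Real.cosh s))
      ≤ (Real.cosh t ^ i * Real.cosh (0 * t) * Real.exp (-(c / 2 * Real.cosh t)))
        * (Real.cosh s ^ j * Real.cosh (ν * s) * Real.exp (-(c / 2 * Real.cosh s))) := by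
  have hct := Real.one_le_cosh t
  have hcs := Real.one_le_cosh s
  have h1 : Real.exp (-(w * Real.cosh t * Real.cosh s))
      ≤ Real.exp (-(c / 2 * Real.cosh t)) * Real.exp (-(c / 2 * Real.cosh s)) := by
    rw [← Real.exp_add]
    apply Real.exp_le_exp.2
    have h2 : Real.cosh t ≤ Real.cosh t * Real.cosh s :=
      le_mul_of_one_le_right (by linarith) hcs
    have h3 : Real.cosh s ≤ Real.cosh t * Real.cosh s :=
      le_mul_of_one_le_left (by linarith) hct
    have h4 : c * (Real.cosh t * Real.cosh s) ≤ w * (Real.cosh t * Real.cosh s) :=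
      mul_le_mul_of_nonneg_right hw (by positivity)
    nlinarith [h2, h3, h4, hc]
  calc Real.cosh t ^ i * Real.cosh s ^ j * Real.cosh (ν * s) *
        Real.exp (-(w * Real.cosh t * Real.cosh s))
      ≤ Real.cosh t ^ i * Real.cosh s ^ j * Real.cosh (ν * s) *
          (Real.exp (-(c / 2 * Real.cosh t)) * Real.exp (-(c / 2 * Real.cosh s))) :=
        mul_le_mul_of_nonneg_left h1 (by positivity)
    _ = _ := by simp only [zero_mul, Real.cosh_zero, mul_one]; ring

lemma integrable_aux (i j : ℕ) (ν : ℝ) {z : ℝ} (hz : 0 < z) :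
    Integrable (fun p : ℝ × ℝ => Real.cosh p.1 ^ i * Real.cosh p.2 ^ j * Real.cosh (ν * p.2) *
      Real.exp (-(z * Real.cosh p.1 * Real.cosh p.2))) μ2 := by
  apply (prod_bound_integrable i j ν (by positivity : (0:ℝ) < z / 2)).mono'
  · exact (by fun_prop :
      Continuous fun p : ℝ × ℝ => Real.cosh p.1 ^ i * Real.cosh p.2 ^ j * Real.cosh (ν * p.2) *
        Real.exp (-(z * Real.cosh p.1 * Real.cosh p.2))).aestronglyMeasurable
  · filter_upwards with p
    rw [Real.norm_eq_abs, abs_of_nonneg (by positivity)]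
    exact integrand_le i j ν hz le_rfl p.1 p.2

lemma hasDerivAt_G (i j : ℕ) (ν : ℝ) {z : ℝ} (hz : 0 < z) :
    HasDerivAt (fun w => G ν w i j) (-G ν z (i+1) (j+1)) z := by
  have key := hasDerivAt_integral_of_dominated_loc_of_deriv_le (μ := μ2) (x₀ := z)
    (s := ball z (z/2))
    (F := fun w (p : ℝ × ℝ) => Real.cosh p.1 ^ i * Real.cosh p.2 ^ j * Real.cosh (ν * p.2) *
      Real.exp (-(w * Real.cosh p.1 * Real.cosh p.2)))
    (F' := fun w (p : ℝ × ℝ) =>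
      -(Real.cosh p.1 ^ (i+1) * Real.cosh p.2 ^ (j+1) * Real.cosh (ν * p.2) *
        Real.exp (-(w * Real.cosh p.1 * Real.cosh p.2))))
    (bound := fun p : ℝ × ℝ =>
      (Real.cosh p.1 ^ (i+1) * Real.cosh (0 * p.1) * Real.exp (-(z/2/2 * Real.cosh p.1)))
        * (Real.cosh p.2 ^ (j+1) * Real.cosh (ν * p.2) * Real.exp (-(z/2/2 * Real.cosh p.2))))
    (ball_mem_nhds z (by positivity))
    (Eventually.of_forall fun w => (by fun_prop :
      Continuous fun p : ℝ × ℝ => Real.cosh p.1 ^ i * Real.cosh p.2 ^ j * Real.cosh (ν * p.2) *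
        Real.exp (-(w * Real.cosh p.1 * Real.cosh p.2))).aestronglyMeasurable)
    (integrable_aux i j ν hz)
    ((by fun_prop :
      Continuous fun p : ℝ × ℝ => -(Real.cosh p.1 ^ (i+1) * Real.cosh p.2 ^ (j+1) *
        Real.cosh (ν * p.2) *
        Real.exp (-(z * Real.cosh p.1 * Real.cosh p.2)))).aestronglyMeasurable)
    ?_ (prod_bound_integrable (i+1) (j+1) ν (by positivity)) ?_
  · have h2 := key.2
    have : ∫ p : ℝ × ℝ, -(Real.cosh p.1 ^ (i+1) * Real.cosh p.2 ^ (j+1) * Real.cosh (ν * p.2) *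
        Real.exp (-(z * Real.cosh p.1 * Real.cosh p.2))) ∂μ2 = -G ν z (i+1) (j+1) := by
      rw [integral_neg]; rfl
    rwa [this] at h2
  · filter_upwards with p w hw
    rw [norm_neg, Real.norm_eq_abs, abs_of_nonneg (by positivity)]
    have hwz : z / 2 ≤ w := by
      have := abs_lt.1 (mem_ball_iff_norm.1 hw)
      linarith [this.1]
    exact integrand_le (i+1) (j+1) ν (half_pos hz) hwz p.1 p.2
  · filter_upwards with p w hw
    have h := (((((hasDerivAt_id w).mul_const (Real.cosh p.1)).mul_const
        (Real.cosh p.2)).neg.exp).const_mul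
        (Real.cosh p.1 ^ i * Real.cosh p.2 ^ j * Real.cosh (ν * p.2)))
    refine h.congr_deriv ?_
    simp only [Pi.neg_apply, id_eq]
    ring

lemma F_eq_G (N : ℕ) (ν : ℝ) {z : ℝ} (hz : 0 < z) : F N ν z = G ν z N 0 := by
  have hint : Integrable (fun p : ℝ × ℝ => Real.cosh p.1 ^ N *
      (Real.exp (-(z * Real.cosh p.1) * Real.cosh p.2) * Real.cosh (ν * p.2))) μ2 := by
    apply (integrable_aux N 0 ν hz).congr
    filter_upwards with p
    simp only [pow_zero]
    rw [show -(z * Real.cosh p.1) * Real.cosh p.2 = -(z * Real.cosh p.1 * Real.cosh p.2) by ring]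
    ring
  have h1 : F N ν z = ∫ t in Ioi (0:ℝ), ∫ s in Ioi (0:ℝ),
      Real.cosh t ^ N * (Real.exp (-(z * Real.cosh t) * Real.cosh s) * Real.cosh (ν * s)) := by
    unfold F besselK
    apply setIntegral_congr_fun measurableSet_Ioi
    intro t _
    beta_reduce
    rw [← integral_const_mul]
  rw [h1, integral_integral hint]
  unfold G μ2
  apply integral_congr_ae
  filter_upwards with p
  rw [show -(z * Real.cosh p.1) * Real.cosh p.2 = -(z * Real.cosh p.1 * Real.cosh p.2) by ring]
  simp only [pow_zero]
  ring

lemma G_eq_iterated (i j : ℕ) (ν : ℝ) {z : ℝ} (hz : 0 < z) :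
    G ν z i j = ∫ t in Ioi (0:ℝ), ∫ s in Ioi (0:ℝ),
      Real.cosh t ^ i * Real.cosh s ^ j * Real.cosh (ν * s) *
        Real.exp (-(z * Real.cosh t * Real.cosh s)) := by
  unfold G μ2
  exact (integral_integral (μ := volume.restrict (Ioi (0:ℝ)))
    (ν := volume.restrict (Ioi (0:ℝ)))
    (f := fun t s => Real.cosh t ^ i * Real.cosh s ^ j * Real.cosh (ν * s) *
      Real.exp (-(z * Real.cosh t * Real.cosh s))) (integrable_aux i j ν hz)).symm

lemma G_ode (N : ℕ) (ν : ℝ) {z : ℝ} (hz : 0 < z) :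
    G ν z (N+2) 0 = G ν z (N+2) 2 - z⁻¹ * G ν z (N+1) 1 - ν ^ 2 / z ^ 2 * G ν z N 0 := by
  have g2 : G ν z (N+2) 2 = ∫ t in Ioi (0:ℝ), ∫ s in Ioi (0:ℝ),
      Real.cosh t ^ (N+2) * Real.cosh s ^ 2 * Real.cosh (ν * s) *
        Real.exp (-(z * Real.cosh t * Real.cosh s)) := G_eq_iterated _ _ ν hz
  have g1 : G ν z (N+1) 1 = ∫ t in Ioi (0:ℝ), ∫ s in Ioi (0:ℝ),
      Real.cosh t ^ (N+1) * Real.cosh s ^ 1 * Real.cosh (ν * s) *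
        Real.exp (-(z * Real.cosh t * Real.cosh s)) := G_eq_iterated _ _ ν hz
  have g0 : G ν z N 0 = ∫ t in Ioi (0:ℝ), ∫ s in Ioi (0:ℝ),
      Real.cosh t ^ N * Real.cosh s ^ 0 * Real.cosh (ν * s) *
        Real.exp (-(z * Real.cosh t * Real.cosh s)) := G_eq_iterated _ _ ν hz
  have g0' : G ν z (N+2) 0 = ∫ t in Ioi (0:ℝ), ∫ s in Ioi (0:ℝ),
      Real.cosh t ^ (N+2) * Real.cosh s ^ 0 * Real.cosh (ν * s) *
        Real.exp (-(z * Real.cosh t * Real.cosh s)) := G_eq_iterated _ _ ν hz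
  have hInt2 : Integrable (fun t => ∫ s in Ioi (0:ℝ),
      Real.cosh t ^ (N+2) * Real.cosh s ^ 2 * Real.cosh (ν * s) *
        Real.exp (-(z * Real.cosh t * Real.cosh s))) (volume.restrict (Ioi 0)) :=
    (integrable_aux (N+2) 2 ν hz).integral_prod_left
  have hInt1 : Integrable (fun t => z⁻¹ * ∫ s in Ioi (0:ℝ),
      Real.cosh t ^ (N+1) * Real.cosh s ^ 1 * Real.cosh (ν * s) *
        Real.exp (-(z * Real.cosh t * Real.cosh s))) (volume.restrict (Ioi 0)) :=
    ((integrable_aux (N+1) 1 ν hz).integral_prod_left).const_mul _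
  have hInt0 : Integrable (fun t => ν ^ 2 / z ^ 2 * ∫ s in Ioi (0:ℝ),
      Real.cosh t ^ N * Real.cosh s ^ 0 * Real.cosh (ν * s) *
        Real.exp (-(z * Real.cosh t * Real.cosh s))) (volume.restrict (Ioi 0)) :=
    ((integrable_aux N 0 ν hz).integral_prod_left).const_mul _
  have hInt21 : Integrable (fun t => (∫ s in Ioi (0:ℝ),
      Real.cosh t ^ (N+2) * Real.cosh s ^ 2 * Real.cosh (ν * s) *
        Real.exp (-(z * Real.cosh t * Real.cosh s)))
      - z⁻¹ * ∫ s in Ioi (0:ℝ),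
      Real.cosh t ^ (N+1) * Real.cosh s ^ 1 * Real.cosh (ν * s) *
        Real.exp (-(z * Real.cosh t * Real.cosh s))) (volume.restrict (Ioi 0)) :=
    hInt2.sub hInt1
  rw [g2, g1, g0, g0', ← integral_const_mul, ← integral_const_mul,
    ← integral_sub hInt2 hInt1, ← integral_sub hInt21 hInt0]
  apply setIntegral_congr_fun measurableSet_Ioi
  intro t ht
  beta_reduce
  have hct : (0:ℝ) < Real.cosh t := Real.cosh_pos t
  have ha : 0 < z * Real.cosh t := mul_pos hz hct
  have e2 : ∫ s in Ioi (0:ℝ), Real.cosh t ^ (N+2) * Real.cosh s ^ 2 * Real.cosh (ν * s) *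
        Real.exp (-(z * Real.cosh t * Real.cosh s))
      = Real.cosh t ^ (N+2) * ∫ s in Ioi (0:ℝ), Real.cosh s ^ 2 * Real.cosh (ν * s) *
        Real.exp (-(z * Real.cosh t * Real.cosh s)) := by
    rw [← integral_const_mul]
    exact setIntegral_congr_fun measurableSet_Ioi fun s _ => by ring
  have e1 : ∫ s in Ioi (0:ℝ), Real.cosh t ^ (N+1) * Real.cosh s ^ 1 * Real.cosh (ν * s) *
        Real.exp (-(z * Real.cosh t * Real.cosh s))
      = Real.cosh t ^ (N+1) * ∫ s in Ioi (0:ℝ), Real.cosh s * Real.cosh (ν * s) *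
        Real.exp (-(z * Real.cosh t * Real.cosh s)) := by
    rw [← integral_const_mul]
    exact setIntegral_congr_fun measurableSet_Ioi fun s _ => by ring
  have e0 : ∫ s in Ioi (0:ℝ), Real.cosh t ^ N * Real.cosh s ^ 0 * Real.cosh (ν * s) *
        Real.exp (-(z * Real.cosh t * Real.cosh s))
      = Real.cosh t ^ N * ∫ s in Ioi (0:ℝ), Real.cosh (ν * s) *
        Real.exp (-(z * Real.cosh t * Real.cosh s)) := by
    rw [← integral_const_mul]
    exact setIntegral_congr_fun measurableSet_Ioi fun s _ => by ring
  have e0' : ∫ s in Ioi (0:ℝ), Real.cosh t ^ (N+2) * Real.cosh s ^ 0 * Real.cosh (ν * s) *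
        Real.exp (-(z * Real.cosh t * Real.cosh s))
      = Real.cosh t ^ (N+2) * ∫ s in Ioi (0:ℝ), Real.cosh (ν * s) *
        Real.exp (-(z * Real.cosh t * Real.cosh s)) := by
    rw [← integral_const_mul]
    exact setIntegral_congr_fun measurableSet_Ioi fun s _ => by ring
  rw [e2, e1, e0, e0', key_ode ν ha]
  field_simp
  ring

end FRec

theorem F_recursion (N : ℕ) (ν : ℝ) (z : ℝ) (hz : 0 < z) :
    F (N + 2) ν z =
      derivWithin (derivWithin (F N ν) (Set.Ioi 0)) (Set.Ioi 0) z
        + z⁻¹ * derivWithin (F N ν) (Set.Ioi 0) z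
        - ν ^ 2 / z ^ 2 * F N ν z := by
  have hd1 : ∀ w ∈ Ioi (0:ℝ), HasDerivAt (F N ν) (-FRec.G ν w (N+1) 1) w := by
    intro w hw
    apply (FRec.hasDerivAt_G N 0 ν hw).congr_of_eventuallyEq
    filter_upwards [Ioi_mem_nhds hw] with u hu
    exact FRec.F_eq_G N ν hu
  have hder1 : ∀ w ∈ Ioi (0:ℝ),
      derivWithin (F N ν) (Ioi 0) w = -FRec.G ν w (N+1) 1 := fun w hw =>
    ((hd1 w hw).hasDerivWithinAt).derivWithin (isOpen_Ioi.uniqueDiffWithinAt hw)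
  have hd2 : HasDerivAt (derivWithin (F N ν) (Ioi 0)) (FRec.G ν z (N+2) 2) z := by
    have h := (FRec.hasDerivAt_G (N+1) 1 ν hz).neg
    rw [neg_neg] at h
    apply h.congr_of_eventuallyEq
    filter_upwards [Ioi_mem_nhds hz] with u hu
    exact hder1 u hu
  have hder2 : derivWithin (derivWithin (F N ν) (Ioi 0)) (Ioi 0) z = FRec.G ν z (N+2) 2 :=
    (hd2.hasDerivWithinAt).derivWithin (isOpen_Ioi.uniqueDiffWithinAt hz)
  rw [hder2, hder1 z hz, FRec.F_eq_G (N+2) ν hz, FRec.F_eq_G N ν hz, FRec.G_ode N ν hz]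
  ring
end

section
/- For every N ∈ ℕ, ν ∈ ℝ and every real z > 0, F_{ν+1}^{N+1}(z) = (ν/z)·F_ν^N(z) − (d/dz)F_ν^N(z), where the derivative is taken with respect to z on (0,∞). -/
open Real MeasureTheory

noncomputable def Kd (ν z : ℝ) : ℝ :=
  ∫ s in Set.Ioi (0 : ℝ), Real.exp (-z * Real.cosh s) * (Real.cosh s * Real.cosh (ν * s))

open Set Filter Topology Metric


lemma cosh_ge_quad (t : ℝ) : 1 + t ^ 2 / 2 ≤ Real.cosh t := by
  have h : Real.cosh t = 1 + 2 * Real.sinh (t / 2) ^ 2 := by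
    have := Real.cosh_two_mul (t / 2)
    have h2 : Real.cosh (t / 2) ^ 2 = Real.sinh (t / 2) ^ 2 + 1 := Real.cosh_sq (t / 2)
    rw [show (2 : ℝ) * (t / 2) = t by ring, h2] at this
    linarith
  rw [h]
  have h1 : |t / 2| ≤ |Real.sinh (t / 2)| := by
    rw [Real.abs_sinh]
    rcases eq_or_lt_of_le (abs_nonneg (t/2)) with h1 | h1
    · simp [← h1]
    · exact (Real.self_lt_sinh_iff.2 h1).le
  have h2 := mul_self_le_mul_self (abs_nonneg (t/2)) h1
  rw [← sq, ← sq, sq_abs, sq_abs] at h2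
  nlinarith

lemma cosh_le_exp_abs (t : ℝ) : Real.cosh t ≤ Real.exp |t| := by
  rw [Real.cosh_eq]
  have h1 : Real.exp t ≤ Real.exp |t| := Real.exp_le_exp.2 (le_abs_self t)
  have h2 : Real.exp (-t) ≤ Real.exp |t| := Real.exp_le_exp.2 (neg_le_abs t)
  linarith

lemma intexp {a : ℝ} (ha : 0 < a) (c : ℝ) :
    IntegrableOn (fun t => Real.exp (c * t - a * Real.cosh t)) (Ioi 0) := by
  have hg : Integrable (fun t : ℝ =>
      Real.exp (-a + c ^ 2 / (2 * a)) * Real.exp (-(a / 2) * (t - c / a) ^ 2)) :=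
    ((integrable_exp_neg_mul_sq (by positivity : (0:ℝ) < a / 2)).comp_sub_right (c / a)).const_mul _
  refine (hg.integrableOn).mono' ?_ ?_
  · exact (Real.continuous_exp.comp (by continuity)).aestronglyMeasurable
  · filter_upwards with t
    rw [Real.norm_eq_abs, abs_of_pos (Real.exp_pos _), ← Real.exp_add]
    apply Real.exp_le_exp.2
    have h := cosh_ge_quad t
    have : a * (1 + t ^ 2 / 2) ≤ a * Real.cosh t := by nlinarith
    have key : (-a + c ^ 2 / (2 * a)) + -(a / 2) * (t - c / a) ^ 2
        = c * t - a * (1 + t ^ 2 / 2) := by field_simp; ring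
    linarith [key ▸ le_refl ((-a + c ^ 2 / (2 * a)) + -(a / 2) * (t - c / a) ^ 2)]

/-- generic domination lemma -/
lemma mono_int {f : ℝ → ℝ} {a c C : ℝ} (ha : 0 < a)
    (hm : AEStronglyMeasurable f (volume.restrict (Ioi 0)))
    (hb : ∀ t ∈ Ioi (0:ℝ), ‖f t‖ ≤ C * Real.exp (c * t - a * Real.cosh t)) :
    IntegrableOn f (Ioi 0) := by
  refine ((intexp ha c).const_mul C).mono' hm ?_
  exact (ae_restrict_iff' measurableSet_Ioi).2 (Filter.Eventually.of_forall hb)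


lemma cosh_mul_le {ν t : ℝ} (ht : 0 ≤ t) : Real.cosh (ν * t) ≤ Real.exp (|ν| * t) := by
  calc Real.cosh (ν * t) ≤ Real.exp |ν * t| := cosh_le_exp_abs _
  _ = Real.exp (|ν| * t) := by rw [abs_mul, abs_of_nonneg ht]

lemma cosh_le_exp {t : ℝ} (ht : 0 ≤ t) : Real.cosh t ≤ Real.exp t := by
  simpa [abs_of_nonneg ht] using cosh_le_exp_abs t

lemma sinh_mul_le {ν t : ℝ} (ht : 0 ≤ t) : |Real.sinh (ν * t)| ≤ Real.exp (|ν| * t) := by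
  rw [Real.abs_sinh]
  calc Real.sinh |ν * t| ≤ Real.cosh |ν * t| := by
        nlinarith [Real.cosh_sub_sinh |ν * t|, Real.exp_pos (-|ν * t|)]
  _ = Real.cosh (ν * t) := Real.cosh_abs _
  _ ≤ Real.exp (|ν| * t) := cosh_mul_le ht

lemma intK (ν : ℝ) {y : ℝ} (hy : 0 < y) :
    IntegrableOn (fun s => Real.exp (-y * Real.cosh s) * Real.cosh (ν * s)) (Set.Ioi 0) := by
  refine mono_int hy (Continuous.aestronglyMeasurable (by continuity)) (C := 1) (c := |ν|) (fun t ht => ?_)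
  have ht' : (0:ℝ) ≤ t := (le_of_lt ht)
  rw [Real.norm_eq_abs, abs_mul, abs_of_pos (Real.exp_pos _),
    abs_of_pos (Real.cosh_pos _), one_mul]
  calc Real.exp (-y * Real.cosh t) * Real.cosh (ν * t)
      ≤ Real.exp (-y * Real.cosh t) * Real.exp (|ν| * t) :=
        mul_le_mul_of_nonneg_left (cosh_mul_le ht') (Real.exp_pos _).le
  _ = Real.exp (|ν| * t - y * Real.cosh t) := by rw [← Real.exp_add]; ring_nf

lemma intKd (ν : ℝ) {y : ℝ} (hy : 0 < y) :
    IntegrableOn (fun s => Real.exp (-y * Real.cosh s) * (Real.cosh s * Real.cosh (ν * s)))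
      (Set.Ioi 0) := by
  refine mono_int hy (Continuous.aestronglyMeasurable (by continuity))
    (C := 1) (c := 1 + |ν|) (fun t ht => ?_)
  have ht' : (0:ℝ) ≤ t := (le_of_lt ht)
  rw [Real.norm_eq_abs, abs_mul, abs_of_pos (Real.exp_pos _), abs_mul,
    abs_of_pos (Real.cosh_pos _), abs_of_pos (Real.cosh_pos _), one_mul]
  calc Real.exp (-y * Real.cosh t) * (Real.cosh t * Real.cosh (ν * t))
      ≤ Real.exp (-y * Real.cosh t) * (Real.exp t * Real.exp (|ν| * t)) := by
        apply mul_le_mul_of_nonneg_left _ (Real.exp_pos _).le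
        exact mul_le_mul (cosh_le_exp ht') (cosh_mul_le ht') (Real.cosh_pos _).le
          (Real.exp_pos _).le
  _ = Real.exp ((1 + |ν|) * t - y * Real.cosh t) := by rw [← Real.exp_add, ← Real.exp_add]; ring_nf

lemma besselK_hasDeriv (ν : ℝ) {y : ℝ} (hy : 0 < y) :
    HasDerivAt (besselK ν) (-Kd ν y) y := by
  have key := hasDerivAt_integral_of_dominated_loc_of_deriv_le
    (μ := volume.restrict (Set.Ioi (0:ℝ)))
    (F := fun x s => Real.exp (-x * Real.cosh s) * Real.cosh (ν * s))
    (F' := fun x s => Real.exp (-x * Real.cosh s) * -Real.cosh s * Real.cosh (ν * s))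
    (x₀ := y) (s := Metric.ball y (y/2))
    (bound := fun s => Real.exp ((1 + |ν|) * s - (y/2) * Real.cosh s))
    (Metric.ball_mem_nhds y (half_pos hy))
    (Filter.Eventually.of_forall fun x =>
      Continuous.aestronglyMeasurable (by continuity))
    (intK ν hy)
    (Continuous.aestronglyMeasurable (by continuity))
    ?_ (intexp (half_pos hy) _) ?_
  · have h1 : (∫ s in Set.Ioi (0:ℝ),
        Real.exp (-y * Real.cosh s) * -Real.cosh s * Real.cosh (ν * s)) = -Kd ν y := by
      rw [Kd, ← integral_neg]
      apply integral_congr_ae (Filter.Eventually.of_forall fun s => by ring)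
    rw [← h1]
    exact key.2
  · rw [ae_restrict_iff' measurableSet_Ioi]
    refine Filter.Eventually.of_forall fun s hs => fun x hx => ?_
    have hs' : (0:ℝ) ≤ s := le_of_lt hs
    have hx2 : y / 2 < x := by
      have := abs_lt.1 (mem_ball_iff_norm.1 hx); linarith [this.1]
    have hc1 : (1:ℝ) ≤ Real.cosh s := Real.one_le_cosh s
    rw [Real.norm_eq_abs, abs_mul, abs_mul, abs_of_pos (Real.exp_pos _), abs_neg,
      abs_of_pos (Real.cosh_pos _), abs_of_pos (Real.cosh_pos _)]
    calc Real.exp (-x * Real.cosh s) * Real.cosh s * Real.cosh (ν * s)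
        ≤ Real.exp (-(y/2) * Real.cosh s) * Real.exp s * Real.exp (|ν| * s) := by
          apply mul_le_mul
          apply mul_le_mul _ (cosh_le_exp hs') (Real.cosh_pos _).le (Real.exp_pos _).le
          · apply Real.exp_le_exp.2; nlinarith
          · exact cosh_mul_le hs'
          · exact (Real.cosh_pos _).le
          · positivity
    _ = Real.exp ((1 + |ν|) * s - y / 2 * Real.cosh s) := by
        rw [← Real.exp_add, ← Real.exp_add]; ring_nf
  · refine Filter.Eventually.of_forall fun s => fun x _ => ?_
    have h1 : HasDerivAt (fun x : ℝ => -x * Real.cosh s) (-Real.cosh s) x := by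
      simpa using ((hasDerivAt_id x).neg.mul_const (Real.cosh s))
    exact (h1.exp).mul_const _


lemma sinh_le_exp {t : ℝ} (ht : 0 ≤ t) : |Real.sinh t| ≤ Real.exp t := by
  simpa [abs_of_nonneg ht] using sinh_mul_le (ν := 1) ht

lemma intS (ν : ℝ) {y : ℝ} (hy : 0 < y) :
    IntegrableOn (fun s => Real.exp (-y * Real.cosh s) * (Real.sinh s * Real.sinh (ν * s)))
      (Set.Ioi 0) := by
  refine mono_int hy (Continuous.aestronglyMeasurable (by continuity))
    (C := 1) (c := 1 + |ν|) (fun t ht => ?_)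
  have ht' : (0:ℝ) ≤ t := le_of_lt ht
  rw [Real.norm_eq_abs, abs_mul, abs_of_pos (Real.exp_pos _), abs_mul, one_mul]
  calc Real.exp (-y * Real.cosh t) * (|Real.sinh t| * |Real.sinh (ν * t)|)
      ≤ Real.exp (-y * Real.cosh t) * (Real.exp t * Real.exp (|ν| * t)) := by
        apply mul_le_mul_of_nonneg_left _ (Real.exp_pos _).le
        exact mul_le_mul (sinh_le_exp ht') (sinh_mul_le ht') (abs_nonneg _) (Real.exp_pos _).le
  _ = Real.exp ((1 + |ν|) * t - y * Real.cosh t) := by rw [← Real.exp_add, ← Real.exp_add]; ring_nf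

lemma besselK_rec (ν : ℝ) {y : ℝ} (hy : 0 < y) :
    besselK (ν + 1) y = ν / y * besselK ν y + Kd ν y := by
  set u : ℝ → ℝ := fun s => Real.sinh (ν * s) * Real.exp (-y * Real.cosh s) with hu
  set u' : ℝ → ℝ := fun s => Real.cosh (ν * s) * ν * Real.exp (-y * Real.cosh s)
      + Real.sinh (ν * s) * (Real.exp (-y * Real.cosh s) * (-y * Real.sinh s)) with hu'
  have hderiv : ∀ s : ℝ, HasDerivAt u (u' s) s := by
    intro s
    have h1 : HasDerivAt (fun s : ℝ => Real.sinh (ν * s)) (Real.cosh (ν * s) * ν) s := by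
      simpa using ((hasDerivAt_id s).const_mul ν).sinh
    have h2 : HasDerivAt (fun s : ℝ => Real.exp (-y * Real.cosh s))
        (Real.exp (-y * Real.cosh s) * (-y * Real.sinh s)) s :=
      ((Real.hasDerivAt_cosh s).const_mul (-y)).exp
    exact h1.mul h2
  have hu'eq : ∀ s : ℝ, u' s = ν * (Real.exp (-y * Real.cosh s) * Real.cosh (ν * s))
      - y * (Real.exp (-y * Real.cosh s) * (Real.sinh s * Real.sinh (ν * s))) := by
    intro s; simp only [hu']; ring
  have hint : IntegrableOn u' (Set.Ioi 0) := by
    refine IntegrableOn.congr_fun ?_ (fun s _ => (hu'eq s).symm) measurableSet_Ioi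
    exact ((intK ν hy).const_mul ν).sub ((intS ν hy).const_mul y)
  have htend : Tendsto u atTop (𝓝 0) := by
    apply squeeze_zero_norm' (a := fun s => Real.exp (-s))
    · filter_upwards [Filter.eventually_ge_atTop (max 1 (2 * (|ν| + 1) / y))] with s hs
      have hs1 : (1:ℝ) ≤ s := le_trans (le_max_left _ _) hs
      have hs2 : 2 * (|ν| + 1) / y ≤ s := le_trans (le_max_right _ _) hs
      have hs0 : (0:ℝ) ≤ s := by linarith
      have hkey : (|ν| + 1) * s ≤ y * Real.cosh s := by
        have h1 : s ^ 2 / 2 ≤ Real.cosh s := by nlinarith [cosh_ge_quad s]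
        have h2 : (|ν| + 1) * s ≤ y * (s ^ 2 / 2) := by
          rw [div_le_iff₀ hy] at hs2; nlinarith [abs_nonneg ν]
        nlinarith
      rw [hu, Real.norm_eq_abs, abs_mul, abs_of_pos (Real.exp_pos _)]
      calc |Real.sinh (ν * s)| * Real.exp (-y * Real.cosh s)
          ≤ Real.exp (|ν| * s) * Real.exp (-y * Real.cosh s) :=
            mul_le_mul_of_nonneg_right (sinh_mul_le hs0) (Real.exp_pos _).le
      _ = Real.exp (|ν| * s + -y * Real.cosh s) := (Real.exp_add _ _).symm
      _ ≤ Real.exp (-s) := Real.exp_le_exp.2 (by nlinarith)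
    · exact Real.tendsto_exp_neg_atTop_nhds_zero
  have hzero : (∫ s in Set.Ioi (0:ℝ), u' s) = 0 := by
    rw [integral_Ioi_of_hasDerivAt_of_tendsto
      ((by continuity : Continuous u).continuousWithinAt)
      (fun x _ => hderiv x) hint htend]
    simp [hu]
  have hsplit : (∫ s in Set.Ioi (0:ℝ), u' s)
      = ν * besselK ν y - y * ∫ s in Set.Ioi (0:ℝ),
          Real.exp (-y * Real.cosh s) * (Real.sinh s * Real.sinh (ν * s)) := by
    rw [setIntegral_congr_fun measurableSet_Ioi (fun s _ => hu'eq s),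
      integral_sub ((intK ν hy).const_mul ν) ((intS ν hy).const_mul y),
      integral_const_mul, integral_const_mul, besselK]
  have hS : (∫ s in Set.Ioi (0:ℝ),
      Real.exp (-y * Real.cosh s) * (Real.sinh s * Real.sinh (ν * s)))
      = ν / y * besselK ν y := by
    rw [hzero] at hsplit
    rw [div_mul_eq_mul_div, eq_div_iff hy.ne']
    linarith [hsplit]
  have hexp : ∀ s : ℝ, Real.exp (-y * Real.cosh s) * Real.cosh ((ν + 1) * s)
      = Real.exp (-y * Real.cosh s) * (Real.cosh s * Real.cosh (ν * s))
        + Real.exp (-y * Real.cosh s) * (Real.sinh s * Real.sinh (ν * s)) := by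
    intro s
    rw [show (ν + 1) * s = ν * s + s by ring, Real.cosh_add]
    ring
  rw [besselK, setIntegral_congr_fun measurableSet_Ioi (fun s _ => hexp s),
    integral_add (intKd ν hy) (intS ν hy), hS, Kd]
  ring


section Bounds

lemma expint_le {h : ℝ → ℝ} (hpos : ∀ s ∈ Set.Ioi (0:ℝ), 0 ≤ h s) {y0 y : ℝ}
    (h0 : 0 < y0) (hle : y0 ≤ y)
    (hint0 : IntegrableOn (fun s => Real.exp (-y0 * Real.cosh s) * h s) (Set.Ioi 0))
    (hint : IntegrableOn (fun s => Real.exp (-y * Real.cosh s) * h s) (Set.Ioi 0)) :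
    (∫ s in Set.Ioi (0:ℝ), Real.exp (-y * Real.cosh s) * h s)
      ≤ Real.exp (y0 - y) * ∫ s in Set.Ioi (0:ℝ), Real.exp (-y0 * Real.cosh s) * h s := by
  rw [← MeasureTheory.integral_const_mul]
  refine setIntegral_mono_on hint (hint0.const_mul _) measurableSet_Ioi (fun s hs => ?_)
  have h1 : Real.exp (-y * Real.cosh s) ≤ Real.exp (y0 - y) * Real.exp (-y0 * Real.cosh s) := by
    rw [← Real.exp_add]
    apply Real.exp_le_exp.2
    nlinarith [Real.one_le_cosh s]
  calc Real.exp (-y * Real.cosh s) * h s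
      ≤ (Real.exp (y0 - y) * Real.exp (-y0 * Real.cosh s)) * h s :=
        mul_le_mul_of_nonneg_right h1 (hpos s hs)
  _ = Real.exp (y0 - y) * (Real.exp (-y0 * Real.cosh s) * h s) := by ring

lemma besselK_nonneg (ν : ℝ) (y : ℝ) : 0 ≤ besselK ν y :=
  setIntegral_nonneg measurableSet_Ioi fun s _ =>
    mul_nonneg (Real.exp_pos _).le (Real.cosh_pos _).le

lemma Kd_nonneg (ν : ℝ) (y : ℝ) : 0 ≤ Kd ν y :=
  setIntegral_nonneg measurableSet_Ioi fun s _ =>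
    mul_nonneg (Real.exp_pos _).le (mul_nonneg (Real.cosh_pos _).le (Real.cosh_pos _).le)

lemma besselK_le (ν : ℝ) {y0 y : ℝ} (h0 : 0 < y0) (hle : y0 ≤ y) :
    besselK ν y ≤ Real.exp (y0 - y) * besselK ν y0 :=
  expint_le (fun s _ => (Real.cosh_pos _).le) h0 hle (intK ν h0) (intK ν (h0.trans_le hle))

lemma Kd_le (ν : ℝ) {y0 y : ℝ} (h0 : 0 < y0) (hle : y0 ≤ y) :
    Kd ν y ≤ Real.exp (y0 - y) * Kd ν y0 :=
  expint_le (fun s _ => mul_nonneg (Real.cosh_pos _).le (Real.cosh_pos _).le) h0 hle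
    (intKd ν h0) (intKd ν (h0.trans_le hle))

lemma besselK_contAt (ν : ℝ) {y : ℝ} (hy : 0 < y) : ContinuousAt (besselK ν) y :=
  (besselK_hasDeriv ν hy).continuousAt

lemma Kd_contAt (ν : ℝ) {y : ℝ} (hy : 0 < y) : ContinuousAt (Kd ν) y := by
  have heq : ∀ᶠ x in 𝓝 y, besselK (ν + 1) x - ν / x * besselK ν x = Kd ν x := by
    filter_upwards [isOpen_Ioi.mem_nhds (show y ∈ Set.Ioi (0:ℝ) from hy)] with x hx
    rw [besselK_rec ν hx]; ring
  refine ContinuousAt.congr ?_ heq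
  exact ((besselK_contAt (ν+1) hy).sub
    (((continuousAt_const.div continuousAt_id hy.ne').mul (besselK_contAt ν hy))))

lemma cosh_pow_le {t : ℝ} (ht : 0 ≤ t) (N : ℕ) : Real.cosh t ^ N ≤ Real.exp ((N : ℝ) * t) := by
  rw [Real.exp_nat_mul]
  exact pow_le_pow_left₀ (Real.cosh_pos _).le (cosh_le_exp ht) N

lemma contF (N : ℕ) (ν : ℝ) {x : ℝ} (hx : 0 < x) :
    Continuous (fun t => Real.cosh t ^ N * besselK ν (x * Real.cosh t)) := by
  rw [continuous_iff_continuousAt]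
  intro t
  have hin : ContinuousAt (fun t : ℝ => x * Real.cosh t) t :=
    ((continuous_mul_left x).comp Real.continuous_cosh).continuousAt
  exact (Real.continuous_cosh.pow N).continuousAt.mul
    (ContinuousAt.comp (f := fun t : ℝ => x * Real.cosh t) (g := besselK ν) (besselK_contAt ν (mul_pos hx (Real.cosh_pos t))) hin)

lemma contFd (N : ℕ) (ν : ℝ) {x : ℝ} (hx : 0 < x) :
    Continuous (fun t => Real.cosh t ^ N * (Kd ν (x * Real.cosh t) * Real.cosh t)) := by
  rw [continuous_iff_continuousAt]
  intro t
  have hin : ContinuousAt (fun t : ℝ => x * Real.cosh t) t :=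
    ((continuous_mul_left x).comp Real.continuous_cosh).continuousAt
  exact (Real.continuous_cosh.pow N).continuousAt.mul
    ((ContinuousAt.comp (f := fun t : ℝ => x * Real.cosh t) (g := Kd ν) (Kd_contAt ν (mul_pos hx (Real.cosh_pos t))) hin).mul
      Real.continuous_cosh.continuousAt)

lemma int_FK (N : ℕ) (ν : ℝ) {x : ℝ} (hx : 0 < x) :
    IntegrableOn (fun t => Real.cosh t ^ N * besselK ν (x * Real.cosh t)) (Set.Ioi 0) := by
  refine mono_int hx ((contF N ν hx).aestronglyMeasurable)
    (C := Real.exp x * besselK ν x) (c := (N : ℝ)) (fun t ht => ?_)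
  have ht' : (0:ℝ) ≤ t := le_of_lt ht
  have h1 : x ≤ x * Real.cosh t := by nlinarith [Real.one_le_cosh t]
  rw [Real.norm_eq_abs, abs_mul, abs_of_pos (pow_pos (Real.cosh_pos _) N),
    abs_of_nonneg (besselK_nonneg ν _)]
  calc Real.cosh t ^ N * besselK ν (x * Real.cosh t)
      ≤ Real.exp ((N:ℝ) * t) * (Real.exp (x - x * Real.cosh t) * besselK ν x) :=
        mul_le_mul (cosh_pow_le ht' N) (besselK_le ν hx h1) (besselK_nonneg ν _)
          (Real.exp_pos _).le
  _ = Real.exp x * besselK ν x * Real.exp ((N:ℝ) * t - x * Real.cosh t) := by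
      have h2 : Real.exp ((N:ℝ) * t) * Real.exp (x - x * Real.cosh t)
          = Real.exp x * Real.exp ((N:ℝ) * t - x * Real.cosh t) := by
        rw [← Real.exp_add, ← Real.exp_add]; congr 1; ring
      rw [show Real.exp ((N:ℝ) * t) * (Real.exp (x - x * Real.cosh t) * besselK ν x)
        = Real.exp ((N:ℝ) * t) * Real.exp (x - x * Real.cosh t) * besselK ν x from by ring, h2]
      ring

lemma int_FKd (N : ℕ) (ν : ℝ) {x : ℝ} (hx : 0 < x) :
    IntegrableOn (fun t => Real.cosh t ^ N * (Kd ν (x * Real.cosh t) * Real.cosh t))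
      (Set.Ioi 0) := by
  refine mono_int hx ((contFd N ν hx).aestronglyMeasurable)
    (C := Real.exp x * Kd ν x) (c := (N : ℝ) + 1) (fun t ht => ?_)
  have ht' : (0:ℝ) ≤ t := le_of_lt ht
  have h1 : x ≤ x * Real.cosh t := by nlinarith [Real.one_le_cosh t]
  rw [Real.norm_eq_abs, abs_mul, abs_of_pos (pow_pos (Real.cosh_pos _) N), abs_mul,
    abs_of_nonneg (Kd_nonneg ν _), abs_of_pos (Real.cosh_pos _)]
  calc Real.cosh t ^ N * (Kd ν (x * Real.cosh t) * Real.cosh t)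
      ≤ Real.exp ((N:ℝ) * t) * ((Real.exp (x - x * Real.cosh t) * Kd ν x) * Real.exp t) := by
        apply mul_le_mul (cosh_pow_le ht' N) _ (mul_nonneg (Kd_nonneg ν _) (Real.cosh_pos _).le)
          (Real.exp_pos _).le
        exact mul_le_mul (Kd_le ν hx h1) (cosh_le_exp ht') (Real.cosh_pos _).le
          (mul_nonneg (Real.exp_pos _).le (Kd_nonneg ν x))
  _ = Real.exp x * Kd ν x * Real.exp (((N:ℝ) + 1) * t - x * Real.cosh t) := by
      have h2 : Real.exp ((N:ℝ) * t) * Real.exp (x - x * Real.cosh t) * Real.exp t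
          = Real.exp x * Real.exp (((N:ℝ) + 1) * t - x * Real.cosh t) := by
        rw [← Real.exp_add, ← Real.exp_add, ← Real.exp_add]; congr 1; ring
      rw [show Real.exp ((N:ℝ) * t) * (Real.exp (x - x * Real.cosh t) * Kd ν x * Real.exp t)
        = Real.exp ((N:ℝ) * t) * Real.exp (x - x * Real.cosh t) * Real.exp t * Kd ν x
        from by ring, h2]
      ring

end Bounds

lemma F_hasDeriv (N : ℕ) (ν : ℝ) {z : ℝ} (hz : 0 < z) :
    HasDerivAt (F N ν)
      (∫ t in Set.Ioi (0:ℝ), Real.cosh t ^ N * (-Kd ν (z * Real.cosh t) * Real.cosh t)) z := by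
  have key := hasDerivAt_integral_of_dominated_loc_of_deriv_le
    (μ := volume.restrict (Set.Ioi (0:ℝ)))
    (F := fun x t => Real.cosh t ^ N * besselK ν (x * Real.cosh t))
    (F' := fun x t => Real.cosh t ^ N * (-Kd ν (x * Real.cosh t) * Real.cosh t))
    (x₀ := z) (s := Metric.ball z (z/2))
    (bound := fun t => (Real.exp (z/2) * Kd ν (z/2)) *
      Real.exp (((N:ℝ) + 1) * t - (z/2) * Real.cosh t))
    (Metric.ball_mem_nhds z (half_pos hz)) ?_ (int_FK N ν hz) ?_ ?_
    (((intexp (half_pos hz) _).const_mul _)) ?_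
  · exact key.2
  · filter_upwards [Metric.ball_mem_nhds z (half_pos hz)] with x hx
    have hx2 : 0 < x := by
      have := abs_lt.1 (mem_ball_iff_norm.1 hx); linarith [this.1]
    exact (contF N ν hx2).aestronglyMeasurable
  · have hc : Continuous (fun t => Real.cosh t ^ N * (-Kd ν (z * Real.cosh t) * Real.cosh t)) := by
      have := contFd N ν hz
      have heq : (fun t => Real.cosh t ^ N * (-Kd ν (z * Real.cosh t) * Real.cosh t))
          = fun t => -(Real.cosh t ^ N * (Kd ν (z * Real.cosh t) * Real.cosh t)) := by
        funext t; ring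
      rw [heq]; exact this.neg
    exact hc.aestronglyMeasurable
  · rw [ae_restrict_iff' measurableSet_Ioi]
    refine Filter.Eventually.of_forall fun t ht x hx => ?_
    have ht' : (0:ℝ) ≤ t := le_of_lt ht
    have hx2 : z / 2 < x := by
      have := abs_lt.1 (mem_ball_iff_norm.1 hx); linarith [this.1]
    have hy0 : (0:ℝ) < z / 2 := half_pos hz
    have h1 : z / 2 ≤ x * Real.cosh t := by nlinarith [Real.one_le_cosh t]
    rw [Real.norm_eq_abs, abs_mul, abs_of_pos (pow_pos (Real.cosh_pos _) N), abs_mul,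
      abs_neg, abs_of_nonneg (Kd_nonneg ν _), abs_of_pos (Real.cosh_pos _)]
    calc Real.cosh t ^ N * (Kd ν (x * Real.cosh t) * Real.cosh t)
        ≤ Real.exp ((N:ℝ) * t) *
            ((Real.exp (z/2 - x * Real.cosh t) * Kd ν (z/2)) * Real.exp t) := by
          apply mul_le_mul (cosh_pow_le ht' N) _
            (mul_nonneg (Kd_nonneg ν _) (Real.cosh_pos _).le) (Real.exp_pos _).le
          exact mul_le_mul (Kd_le ν hy0 h1) (cosh_le_exp ht') (Real.cosh_pos _).le
            (mul_nonneg (Real.exp_pos _).le (Kd_nonneg ν _))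
    _ ≤ Real.exp ((N:ℝ) * t) *
            ((Real.exp (z/2 - (z/2) * Real.cosh t) * Kd ν (z/2)) * Real.exp t) := by
          apply mul_le_mul_of_nonneg_left _ (Real.exp_pos _).le
          apply mul_le_mul_of_nonneg_right _ (Real.exp_pos _).le
          apply mul_le_mul_of_nonneg_right _ (Kd_nonneg ν _)
          apply Real.exp_le_exp.2
          nlinarith [Real.one_le_cosh t, Real.cosh_pos t]
    _ = Real.exp (z/2) * Kd ν (z/2) * Real.exp (((N:ℝ) + 1) * t - z/2 * Real.cosh t) := by
          have h2 : Real.exp ((N:ℝ) * t) * Real.exp (z/2 - z/2 * Real.cosh t) * Real.exp t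
              = Real.exp (z/2) * Real.exp (((N:ℝ) + 1) * t - z/2 * Real.cosh t) := by
            rw [← Real.exp_add, ← Real.exp_add, ← Real.exp_add]; congr 1; ring
          rw [show Real.exp ((N:ℝ) * t) *
              ((Real.exp (z/2 - z/2 * Real.cosh t) * Kd ν (z/2)) * Real.exp t)
              = Real.exp ((N:ℝ) * t) * Real.exp (z/2 - z/2 * Real.cosh t) * Real.exp t *
                Kd ν (z/2) from by ring, h2]
          ring
  · rw [ae_restrict_iff' measurableSet_Ioi]
    refine Filter.Eventually.of_forall fun t ht x hx => ?_
    have hx2 : 0 < x := by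
      have := abs_lt.1 (mem_ball_iff_norm.1 hx); linarith [this.1, half_pos hz]
    have h1 : HasDerivAt (fun x : ℝ => x * Real.cosh t) (Real.cosh t) x :=
      hasDerivAt_mul_const _
    have h2 := HasDerivAt.comp (h₂ := besselK ν) (h := fun x : ℝ => x * Real.cosh t) x
      (besselK_hasDeriv ν (mul_pos hx2 (Real.cosh_pos t))) h1
    exact h2.const_mul _

theorem F_recursion_two (N : ℕ) (ν : ℝ) (z : ℝ) (hz : 0 < z) :
    F (N + 1) (ν + 1) z = ν / z * F N ν z - derivWithin (F N ν) (Set.Ioi 0) z := by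
  have hd := F_hasDeriv N ν hz
  have hdw : derivWithin (F N ν) (Set.Ioi 0) z
      = ∫ t in Set.Ioi (0:ℝ), Real.cosh t ^ N * (-Kd ν (z * Real.cosh t) * Real.cosh t) :=
    hd.hasDerivWithinAt.derivWithin (isOpen_Ioi.uniqueDiffWithinAt hz)
  have hneg : (∫ t in Set.Ioi (0:ℝ), Real.cosh t ^ N * (-Kd ν (z * Real.cosh t) * Real.cosh t))
      = -∫ t in Set.Ioi (0:ℝ), Real.cosh t ^ N * (Kd ν (z * Real.cosh t) * Real.cosh t) := by
    rw [← integral_neg]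
    exact setIntegral_congr_fun measurableSet_Ioi fun t _ => by ring
  have hpt : ∀ t ∈ Set.Ioi (0:ℝ),
      Real.cosh t ^ (N + 1) * besselK (ν + 1) (z * Real.cosh t)
      = ν / z * (Real.cosh t ^ N * besselK ν (z * Real.cosh t))
        + Real.cosh t ^ N * (Kd ν (z * Real.cosh t) * Real.cosh t) := by
    intro t _
    have hpos : 0 < z * Real.cosh t := mul_pos hz (Real.cosh_pos t)
    rw [besselK_rec ν hpos, pow_succ]
    have hc : Real.cosh t ≠ 0 := (Real.cosh_pos t).ne'
    field_simp
  have hLHS : F (N + 1) (ν + 1) z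
      = ν / z * F N ν z
        + ∫ t in Set.Ioi (0:ℝ), Real.cosh t ^ N * (Kd ν (z * Real.cosh t) * Real.cosh t) := by
    rw [F, setIntegral_congr_fun measurableSet_Ioi hpt,
      integral_add ((int_FK N ν hz).const_mul _) (int_FKd N ν hz),
      MeasureTheory.integral_const_mul, F]
  rw [hLHS, hdw, hneg]
  ring
end
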